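/- arXiv:1106.4582 — 2 statements merged into one kernel-verified Lean document; each statement's English description precedes it below -/
import Mathlib

section
/- Let D ≥ 2 be an integer, c₂ > 0 and s₀ ≥ 1 reals, and let F be a Borel probability measure on [0,∞) with mean ∫ s dF(s) = 1 and tail F((s,∞)) ≤ c₂ s^{-D/(D-1)} for all s ≥ s₀. For q > 0 and an integer h ≥ 1, define J_h(s) = e^{-qs} Σ_{i=h}^{∞} (qs)^{i}/i!. Let m ≥ 2 and h₁, …, h_m be positive integers with h_T = h₁ + ⋯ + h_m ≥ 5, let k be a real number with k ≥ D·max(c₂, 1/c₂)·s₀^{2h_T}·h_T^{h_T+1}, and suppose 0 < q ≤ min(c₂, k^{-(D-1)(h_T+1)}). Then (3k)^{m-1} · (∏_{ℓ=1}^{m-1} ∫_0^{∞} J_{h_ℓ}(s) dF(s)) · ∫_0^{∞} (k+s) J_{h_m}(s) dF(s) ≤ 81 D² (c₂+1)² s₀^{2h_T} h_T^{h_T} (3k)^{h_T} q^{D/(D-1)}. -/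
open Filter Topology MeasureTheory
open scoped ENNReal NNReal

noncomputable def jsqPoissonTail (q : ℝ) (h : ℕ) (s : ℝ) : ℝ :=
  Real.exp (-(q * s)) * ∑' i : ℕ, (q * s) ^ (h + i) / (Nat.factorial (h + i) : ℝ)

lemma real_exp_tsum (x : ℝ) : Real.exp x = ∑' n : ℕ, x ^ n / (n.factorial : ℝ) := by
  rw [Real.exp_eq_exp_ℝ, NormedSpace.exp_eq_tsum_div]

lemma jsq_summable (x : ℝ) (n : ℕ) :
    Summable (fun i : ℕ => x ^ (n + i) / ((n + i).factorial : ℝ)) := by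
  have := (Real.summable_pow_div_factorial x).comp_injective (add_right_injective n)
  simpa [Function.comp_def] using this

lemma jsq_eq (q : ℝ) (n : ℕ) (s : ℝ) :
    jsqPoissonTail q n s
      = 1 - Real.exp (-(q * s)) * ∑ i ∈ Finset.range n, (q * s) ^ i / (i.factorial : ℝ) := by
  have hsum : Summable (fun i : ℕ => (q * s) ^ i / (i.factorial : ℝ)) :=
    Real.summable_pow_div_factorial _
  have hsplit := Summable.sum_add_tsum_nat_add (f := fun i : ℕ => (q * s) ^ i / (i.factorial : ℝ)) n hsum
  have hexp : ∑' i : ℕ, (q * s) ^ i / (i.factorial : ℝ) = Real.exp (q * s) :=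
    (real_exp_tsum (q * s)).symm
  have : (∑' i : ℕ, (q * s) ^ (n + i) / ((n + i).factorial : ℝ))
      = Real.exp (q * s) - ∑ i ∈ Finset.range n, (q * s) ^ i / (i.factorial : ℝ) := by
    have hc : (fun i : ℕ => (q * s) ^ (n + i) / ((n + i).factorial : ℝ))
        = fun i : ℕ => (q * s) ^ (i + n) / ((i + n).factorial : ℝ) := by
      funext i; rw [add_comm n i]
    rw [hc, ← hexp, ← hsplit]; ring
  rw [jsqPoissonTail, this]
  rw [mul_sub, ← Real.exp_add]
  simp

lemma jsq_nonneg {q s : ℝ} (n : ℕ) (hx : 0 ≤ q * s) : 0 ≤ jsqPoissonTail q n s := by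
  rw [jsq_eq]
  have h1 : ∑ i ∈ Finset.range n, (q*s)^i / (i.factorial:ℝ) ≤ Real.exp (q*s) :=
    Real.sum_le_exp_of_nonneg hx n
  have h2 := mul_le_mul_of_nonneg_left h1 (le_of_lt (Real.exp_pos (-(q*s))))
  rw [← Real.exp_add, neg_add_cancel, Real.exp_zero] at h2
  linarith

lemma jsq_partial_nonneg {q s : ℝ} (n : ℕ) (hx : 0 ≤ q * s) :
    0 ≤ ∑ i ∈ Finset.range n, (q*s)^i / (i.factorial:ℝ) :=
  Finset.sum_nonneg fun i _ => div_nonneg (pow_nonneg hx i) (Nat.cast_nonneg _)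

lemma jsq_le_one {q s : ℝ} (n : ℕ) (hx : 0 ≤ q * s) : jsqPoissonTail q n s ≤ 1 := by
  rw [jsq_eq]
  have := mul_nonneg (le_of_lt (Real.exp_pos (-(q*s)))) (jsq_partial_nonneg n hx)
  linarith

lemma jsq_le_lin {q s : ℝ} (n : ℕ) (hn : 1 ≤ n) (hx : 0 ≤ q * s) :
    jsqPoissonTail q n s ≤ q * s := by
  rw [jsq_eq]
  have h0 : (1:ℝ) ≤ ∑ i ∈ Finset.range n, (q*s)^i / (i.factorial:ℝ) := by
    have := Finset.single_le_sum (f := fun i : ℕ => (q*s)^i / (i.factorial:ℝ))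
      (fun i _ => div_nonneg (pow_nonneg hx i) (Nat.cast_nonneg _))
      (Finset.mem_range.2 (by omega : 0 < n))
    simpa using this
  have h1 : -(q*s) + 1 ≤ Real.exp (-(q*s)) := Real.add_one_le_exp _
  have h2 := mul_le_mul_of_nonneg_left h0 (le_of_lt (Real.exp_pos (-(q*s))))
  rw [mul_one] at h2
  linarith

lemma jsq_le_pow {q s : ℝ} (n : ℕ) (hx : 0 ≤ q * s) : jsqPoissonTail q n s ≤ (q * s) ^ n := by
  rw [jsqPoissonTail]
  set x := q * s
  have hle : (∑' i : ℕ, x ^ (n + i) / ((n + i).factorial : ℝ))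
      ≤ x ^ n * Real.exp x := by
    have hg : Summable (fun i : ℕ => x ^ n * (x ^ i / (i.factorial : ℝ))) :=
      (Real.summable_pow_div_factorial x).mul_left _
    have hfg : ∀ i : ℕ, x ^ (n + i) / ((n + i).factorial : ℝ)
        ≤ x ^ n * (x ^ i / (i.factorial : ℝ)) := by
      intro i
      rw [pow_add, mul_div_assoc]
      refine mul_le_mul_of_nonneg_left ?_ (pow_nonneg hx n)
      refine div_le_div_of_nonneg_left (pow_nonneg hx i) ?_ ?_
      · exact_mod_cast Nat.factorial_pos i
      · exact_mod_cast Nat.factorial_le (Nat.le_add_left i n)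
    calc (∑' i : ℕ, x ^ (n + i) / ((n + i).factorial : ℝ))
        ≤ ∑' i : ℕ, x ^ n * (x ^ i / (i.factorial : ℝ)) :=
          Summable.tsum_le_tsum hfg (jsq_summable x n) hg
      _ = x ^ n * ∑' i : ℕ, x ^ i / (i.factorial : ℝ) := tsum_mul_left
      _ = x ^ n * Real.exp x := by rw [real_exp_tsum]
  calc Real.exp (-x) * ∑' i : ℕ, x ^ (n + i) / ((n + i).factorial : ℝ)
      ≤ Real.exp (-x) * (x ^ n * Real.exp x) :=
        mul_le_mul_of_nonneg_left hle (le_of_lt (Real.exp_pos _))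
    _ = x ^ n := by rw [← mul_assoc, mul_comm (Real.exp (-x)), mul_assoc, ← Real.exp_add]; simp

lemma jsq_continuous (q : ℝ) (n : ℕ) : Continuous (fun s => jsqPoissonTail q n s) := by
  have hfe : (fun s => jsqPoissonTail q n s)
      = fun s => 1 - Real.exp (-(q*s)) * ∑ i ∈ Finset.range n, (q*s)^i / (i.factorial:ℝ) :=
    funext (jsq_eq q n)
  rw [hfe]; fun_prop

lemma two_rpow_lb {ρ : ℝ} (h0 : 0 < ρ) (h1 : ρ ≤ 1) : ρ / 3 ≤ 1 - (2:ℝ) ^ (-ρ) := by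
  have hl2 : (0.6931471803 : ℝ) < Real.log 2 := Real.log_two_gt_d9
  have hy : (2:ℝ) ^ (-ρ) = Real.exp (Real.log 2 * (-ρ)) :=
    Real.rpow_def_of_pos two_pos _
  have he : Real.log 2 * ρ + 1 ≤ Real.exp (Real.log 2 * ρ) := Real.add_one_le_exp _
  have hpos : (0:ℝ) < Real.log 2 * ρ + 1 := by nlinarith
  have hinv : Real.exp (Real.log 2 * (-ρ)) = (Real.exp (Real.log 2 * ρ))⁻¹ := by
    rw [← Real.exp_neg]; ring_nf
  have h5 : (Real.exp (Real.log 2 * ρ))⁻¹ ≤ (Real.log 2 * ρ + 1)⁻¹ :=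
    inv_anti₀ hpos he
  have h6 : (Real.log 2 * ρ + 1)⁻¹ ≤ 1 - ρ/3 := by
    rw [inv_le_iff_one_le_mul₀ hpos]
    have hL0 : (0:ℝ) < Real.log 2 := by linarith
    have key := mul_le_mul_of_nonneg_left h1 (le_of_lt (mul_pos hL0 h0))
    nlinarith [key]
  rw [hy, hinv]
  linarith

lemma two_rpow_sub_one_lb {ρ : ℝ} (h0 : 0 < ρ) : ρ / 2 ≤ (2:ℝ) ^ ρ - 1 := by
  have hl2 : (0.6931471803 : ℝ) < Real.log 2 := Real.log_two_gt_d9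
  have hy : (2:ℝ) ^ ρ = Real.exp (Real.log 2 * ρ) := Real.rpow_def_of_pos two_pos _
  have he : Real.log 2 * ρ + 1 ≤ Real.exp (Real.log 2 * ρ) := Real.add_one_le_exp _
  rw [hy]; nlinarith

lemma geom_sum_bound (x ρ : ℝ) (h0 : 0 < ρ) (hx : x ≤ ρ) (N : ℕ) :
    ∑ j ∈ Finset.range (N+1), (2:ℝ) ^ ((j:ℝ) * x) ≤ (1 + 2/ρ) * 2 ^ ((N:ℝ) * ρ) := by
  set r : ℝ := (2:ℝ) ^ ρ with hr
  have hr1 : (1:ℝ) < r := by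
    have := Real.rpow_lt_rpow_of_exponent_lt (one_lt_two) h0
    simpa using this
  have hterm : ∀ j ∈ Finset.range (N+1), (2:ℝ) ^ ((j:ℝ) * x) ≤ r ^ j := by
    intro j _
    have h1 : (2:ℝ) ^ ((j:ℝ) * x) ≤ (2:ℝ) ^ ((j:ℝ) * ρ) :=
      Real.rpow_le_rpow_of_exponent_le one_le_two
        (mul_le_mul_of_nonneg_left hx (Nat.cast_nonneg j))
    have h2 : r ^ j = (2:ℝ) ^ ((j:ℝ) * ρ) := by
      rw [← Real.rpow_natCast r j, hr, ← Real.rpow_mul (by norm_num : (0:ℝ) ≤ 2)]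
      ring_nf
    rw [h2]; exact h1
  have hsum : ∑ j ∈ Finset.range (N+1), (2:ℝ) ^ ((j:ℝ) * x)
      ≤ ∑ j ∈ Finset.range (N+1), r ^ j := Finset.sum_le_sum hterm
  have hgeom : ∑ j ∈ Finset.range (N+1), r ^ j = (r ^ (N+1) - 1) / (r - 1) :=
    geom_sum_eq (ne_of_gt hr1) (N+1)
  have hΔ : ρ/2 ≤ r - 1 := two_rpow_sub_one_lb h0
  have hrN : (1:ℝ) ≤ r ^ N := one_le_pow₀ (le_of_lt hr1)
  have hfin : (r ^ (N+1) - 1) / (r - 1) ≤ (1 + 2/ρ) * r ^ N := by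
    rw [div_le_iff₀ (by linarith)]
    have h1 : (1:ℝ) ≤ (2/ρ) * (r - 1) := by
      have : (2/ρ) * (ρ/2) ≤ (2/ρ) * (r-1) :=
        mul_le_mul_of_nonneg_left hΔ (by positivity)
      have h2 : (2/ρ) * (ρ/2) = 1 := by field_simp
      linarith
    have h2 : r ^ N * 1 ≤ r ^ N * ((2/ρ) * (r - 1)) :=
      mul_le_mul_of_nonneg_left h1 (by positivity)
    have h3 : r ^ (N+1) = r ^ N * r := pow_succ r N
    nlinarith
  have hlast : (1 + 2/ρ) * r ^ N = (1 + 2/ρ) * 2 ^ ((N:ℝ) * ρ) := by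
    rw [← Real.rpow_natCast r N, hr, ← Real.rpow_mul (by norm_num : (0:ℝ) ≤ 2)]
    ring_nf
  calc ∑ j ∈ Finset.range (N+1), (2:ℝ) ^ ((j:ℝ) * x)
      ≤ (r ^ (N+1) - 1) / (r - 1) := by rw [← hgeom]; exact hsum
    _ ≤ (1 + 2/ρ) * r ^ N := hfin
    _ = (1 + 2/ρ) * 2 ^ ((N:ℝ) * ρ) := hlast

lemma dyadic_cover_pt (U s : ℝ) (hU : 0 < U) (hs : U < s) :
    ENNReal.ofReal s ≤ ∑' j : ℕ,
      (Set.Ioi ((2:ℝ)^j * U)).indicator (fun _ => ENNReal.ofReal ((2:ℝ)^(j+1) * U)) s := by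
  have hex : ∃ n : ℕ, s ≤ 2^(n+1) * U := by
    obtain ⟨n, hn⟩ := pow_unbounded_of_one_lt (s / U) (one_lt_two (α := ℝ))
    refine ⟨n, ?_⟩
    have := (div_lt_iff₀ hU).1 hn
    have h2 : (2:ℝ)^n * U ≤ 2^(n+1) * U := by
      have : (2:ℝ)^n ≤ 2^(n+1) := by
        apply pow_le_pow_right₀ one_le_two (Nat.le_succ n)
      nlinarith
    linarith
  classical
  set n₀ := Nat.find hex with hn₀
  have key1 : s ≤ 2^(n₀+1) * U := Nat.find_spec hex
  have key2 : 2^n₀ * U < s := by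
    rcases Nat.eq_zero_or_pos n₀ with h0 | h0
    · rw [h0]; simpa using hs
    · obtain ⟨t, ht⟩ := Nat.exists_eq_succ_of_ne_zero (Nat.pos_iff_ne_zero.1 h0)
      have := Nat.find_min hex (by omega : t < n₀)
      rw [ht]; push_neg at this; exact this
  have hmem : s ∈ Set.Ioi ((2:ℝ)^n₀ * U) := key2
  calc ENNReal.ofReal s ≤ ENNReal.ofReal ((2:ℝ)^(n₀+1) * U) := ENNReal.ofReal_le_ofReal key1
    _ = (Set.Ioi ((2:ℝ)^n₀ * U)).indicator
          (fun _ => ENNReal.ofReal ((2:ℝ)^(n₀+1) * U)) s :=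
        (Set.indicator_of_mem hmem fun _ => ENNReal.ofReal ((2:ℝ)^(n₀+1) * U)).symm
    _ ≤ _ := ENNReal.le_tsum n₀

lemma tail_int_bound (D : ℕ) (hD : 2 ≤ D) (c₂ s₀ : ℝ) (hc₂ : 0 < c₂) (hs₀ : 1 ≤ s₀)
    (F : Measure ℝ) [IsProbabilityMeasure F]
    (htail : ∀ s : ℝ, s₀ ≤ s →
      F (Set.Ioi s) ≤ ENNReal.ofReal (c₂ * s ^ (-((D:ℝ) / ((D:ℝ) - 1)))))
    (U : ℝ) (hU : s₀ ≤ U) :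
    ∫ s in Set.Ioi U, s ∂F
      ≤ 6 * ((D:ℝ) - 1) * c₂ * U ^ (1 - (D:ℝ)/((D:ℝ)-1)) := by
  have hd2 : (2:ℝ) ≤ (D:ℝ) := by exact_mod_cast hD
  set β : ℝ := (D:ℝ)/((D:ℝ)-1) with hβ
  have hd1 : (0:ℝ) < (D:ℝ) - 1 := by linarith
  have hβ1 : 1 < β := by
    rw [hβ, lt_div_iff₀ hd1]; linarith
  have hβ2 : β ≤ 2 := by
    rw [hβ, div_le_iff₀ hd1]; linarith
  have hU0 : (0:ℝ) < U := by linarith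
  have hAnn : (0:ℝ) ≤ 2 * c₂ * U ^ (1-β) := by positivity
  -- rewrite as lintegral
  have hrw : ∫ s in Set.Ioi U, s ∂F
      = (∫⁻ s in Set.Ioi U, ENNReal.ofReal s ∂F).toReal := by
    rw [integral_eq_lintegral_of_nonneg_ae]
    · exact (ae_restrict_iff' measurableSet_Ioi).2
        (ae_of_all _ fun s hs => le_of_lt (lt_trans hU0 hs))
    · exact measurable_id.aestronglyMeasurable
  rw [hrw]
  refine ENNReal.toReal_le_of_le_ofReal (by positivity) ?_
  have hmeas : Measurable fun s => ∑' j : ℕ,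
      (Set.Ioi ((2:ℝ)^j * U)).indicator (fun _ => ENNReal.ofReal ((2:ℝ)^(j+1) * U)) s :=
    Measurable.ennreal_tsum fun j => measurable_const.indicator measurableSet_Ioi
  have hBpos : (0:ℝ) < (2:ℝ) ^ (1-β) := Real.rpow_pos_of_pos two_pos _
  have hB1 : (2:ℝ) ^ (1-β) < 1 :=
    Real.rpow_lt_one_of_one_lt_of_neg one_lt_two (by linarith)
  calc ∫⁻ s in Set.Ioi U, ENNReal.ofReal s ∂F
      ≤ ∫⁻ s in Set.Ioi U, (∑' j : ℕ,
          (Set.Ioi ((2:ℝ)^j * U)).indicator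
            (fun _ => ENNReal.ofReal ((2:ℝ)^(j+1) * U)) s) ∂F := by
        refine setLIntegral_mono hmeas fun s hs => dyadic_cover_pt U s hU0 hs
    _ ≤ ∫⁻ s, (∑' j : ℕ,
          (Set.Ioi ((2:ℝ)^j * U)).indicator
            (fun _ => ENNReal.ofReal ((2:ℝ)^(j+1) * U)) s) ∂F :=
        setLIntegral_le_lintegral _ _
    _ = ∑' j : ℕ, ENNReal.ofReal ((2:ℝ)^(j+1) * U) * F (Set.Ioi ((2:ℝ)^j * U)) := by
        rw [lintegral_tsum fun j =>
          (measurable_const.indicator measurableSet_Ioi).aemeasurable]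
        congr 1; funext j
        rw [lintegral_indicator_const measurableSet_Ioi]
    _ ≤ ∑' j : ℕ, ENNReal.ofReal (2 * c₂ * U ^ (1-β)) * (ENNReal.ofReal ((2:ℝ)^(1-β)))^j := by
        refine ENNReal.tsum_le_tsum fun j => ?_
        have h2j : (1:ℝ) ≤ (2:ℝ)^j := one_le_pow₀ one_le_two
        have hUj : s₀ ≤ (2:ℝ)^j * U := by nlinarith
        have hUj0 : (0:ℝ) < (2:ℝ)^j * U := by nlinarith
        calc ENNReal.ofReal ((2:ℝ)^(j+1) * U) * F (Set.Ioi ((2:ℝ)^j * U))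
            ≤ ENNReal.ofReal ((2:ℝ)^(j+1) * U)
              * ENNReal.ofReal (c₂ * ((2:ℝ)^j * U) ^ (-β)) :=
              mul_le_mul_right (htail _ hUj) _
          _ = ENNReal.ofReal (((2:ℝ)^(j+1) * U) * (c₂ * ((2:ℝ)^j * U) ^ (-β))) := by
              rw [← ENNReal.ofReal_mul (by positivity)]
          _ = ENNReal.ofReal ((2 * c₂ * U ^ (1-β)) * ((2:ℝ)^(1-β))^j) := by
              congr 1
              have e1 : ((2:ℝ)^j * U) ^ (-β) = (2:ℝ)^((j:ℝ)*(-β)) * U^(-β) := by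
                rw [Real.mul_rpow (by positivity) (le_of_lt hU0),
                  ← Real.rpow_natCast (2:ℝ) j, ← Real.rpow_mul (by norm_num : (0:ℝ) ≤ 2)]
              have e2 : ((2:ℝ)^(1-β))^j = (2:ℝ)^((1-β)*(j:ℝ)) := by
                rw [← Real.rpow_natCast ((2:ℝ)^(1-β)) j,
                  ← Real.rpow_mul (by norm_num : (0:ℝ) ≤ 2)]
              have e3 : ((2:ℝ))^(j+1) = (2:ℝ)^(j:ℝ) * 2 := by
                rw [pow_succ, Real.rpow_natCast]
              have e4 : U ^ ((1:ℝ)-β) = U * U^(-β) := by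
                rw [show (1:ℝ)-β = 1 + (-β) by ring, Real.rpow_add hU0, Real.rpow_one]
              have e5 : (2:ℝ)^((1-β)*(j:ℝ)) = (2:ℝ)^(j:ℝ) * (2:ℝ)^((j:ℝ)*(-β)) := by
                rw [← Real.rpow_add two_pos]; ring_nf
              rw [e1, e2, e3, e4, e5]; ring
          _ = ENNReal.ofReal (2 * c₂ * U ^ (1-β)) * (ENNReal.ofReal ((2:ℝ)^(1-β)))^j := by
              rw [ENNReal.ofReal_mul hAnn, ENNReal.ofReal_pow (le_of_lt hBpos)]
    _ = ENNReal.ofReal (2 * c₂ * U ^ (1-β)) * (1 - ENNReal.ofReal ((2:ℝ)^(1-β)))⁻¹ := by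
        rw [ENNReal.tsum_mul_left, ENNReal.tsum_geometric]
    _ ≤ ENNReal.ofReal (2 * c₂ * U ^ (1-β)) * ENNReal.ofReal (3 * ((D:ℝ)-1)) := by
        refine mul_le_mul_right ?_ _
        have hsub : (1:ℝ≥0∞) - ENNReal.ofReal ((2:ℝ)^(1-β))
            = ENNReal.ofReal (1 - (2:ℝ)^(1-β)) := by
          rw [ENNReal.ofReal_sub _ (le_of_lt hBpos), ENNReal.ofReal_one]
        rw [hsub, ← ENNReal.ofReal_inv_of_pos (by linarith)]
        refine ENNReal.ofReal_le_ofReal ?_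
        have hlb : (β-1)/3 ≤ 1 - (2:ℝ)^(1-β) := by
          have := two_rpow_lb (ρ := β - 1) (by linarith) (by linarith)
          rw [show (1-β) = -(β-1) by ring]
          exact this
        have hβd : (β - 1) * ((D:ℝ) - 1) = 1 := by
          rw [hβ]; field_simp; ring
        have h3 : (0:ℝ) < (β-1)/3 := by linarith
        have hβm : β - 1 = 1/((D:ℝ)-1) := by rw [hβ]; field_simp; ring
        calc (1 - (2:ℝ)^(1-β))⁻¹ ≤ ((β-1)/3)⁻¹ := inv_anti₀ h3 hlb
          _ = 3 * ((D:ℝ)-1) := by rw [inv_div, hβm]; field_simp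
    _ = ENNReal.ofReal (6 * ((D:ℝ) - 1) * c₂ * U ^ (1-β)) := by
        rw [← ENNReal.ofReal_mul hAnn]; congr 1; ring

lemma dyadic_up (D : ℕ) (hD : 2 ≤ D) (c₂ s₀ : ℝ) (hc₂ : 0 < c₂) (hs₀ : 1 ≤ s₀)
    (F : Measure ℝ) [IsProbabilityMeasure F]
    (htail : ∀ s : ℝ, s₀ ≤ s →
      F (Set.Ioi s) ≤ ENNReal.ofReal (c₂ * s ^ (-((D:ℝ)/((D:ℝ)-1)))))
    (n : ℕ) (hn : 1 ≤ n) (U : ℝ) (hU : s₀ ≤ U) (ρ : ℝ) (hρ : 0 < ρ)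
    (hρ2 : (n:ℝ) - (D:ℝ)/((D:ℝ)-1) ≤ ρ) :
    ∫ s in Set.Ioc s₀ U, (s:ℝ)^n ∂F
      ≤ (1 + 2/ρ) * 2^n * c₂ * s₀ ^ ((n:ℝ) - (D:ℝ)/((D:ℝ)-1)) * (U/s₀) ^ ρ := by
  classical
  have hd2 : (2:ℝ) ≤ (D:ℝ) := by exact_mod_cast hD
  set β : ℝ := (D:ℝ)/((D:ℝ)-1) with hβ
  have hs₀0 : (0:ℝ) < s₀ := by linarith
  have hU0 : (0:ℝ) < U := by linarith
  set A : ℝ := 2^n * c₂ * s₀ ^ ((n:ℝ) - β) with hA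
  have hA0 : 0 ≤ A := by positivity
  -- choose N
  have hex : ∃ N : ℕ, U ≤ 2^(N+1) * s₀ := by
    obtain ⟨N, hN⟩ := pow_unbounded_of_one_lt (U / s₀) (one_lt_two (α := ℝ))
    refine ⟨N, ?_⟩
    have := (div_lt_iff₀ hs₀0).1 hN
    have h2 : (2:ℝ)^N * s₀ ≤ 2^(N+1) * s₀ := by
      have : (2:ℝ)^N ≤ 2^(N+1) := pow_le_pow_right₀ one_le_two (Nat.le_succ N)
      nlinarith
    linarith
  set N := Nat.find hex with hN
  have keyN : U ≤ 2^(N+1) * s₀ := Nat.find_spec hex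
  have keyN2 : (2:ℝ)^N * s₀ ≤ U := by
    rcases Nat.eq_zero_or_pos N with h0 | h0
    · rw [h0]; simpa using hU
    · obtain ⟨t, ht⟩ := Nat.exists_eq_succ_of_ne_zero (Nat.pos_iff_ne_zero.1 h0)
      have := Nat.find_min hex (by omega : t < N)
      push_neg at this
      rw [ht]; exact le_of_lt this
  -- the dyadic pieces
  set G : ℕ → ℝ → ℝ≥0∞ := fun j =>
    if (2:ℝ)^j * s₀ < U then
      (Set.Ioi ((2:ℝ)^j * s₀)).indicator (fun _ => ENNReal.ofReal (((2:ℝ)^(j+1) * s₀)^n))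
    else 0 with hG
  have hGmeas : ∀ j, Measurable (G j) := by
    intro j; rw [hG]; dsimp only
    split_ifs
    · exact measurable_const.indicator measurableSet_Ioi
    · exact measurable_const
  have cover : ∀ s ∈ Set.Ioc s₀ U, ENNReal.ofReal (s^n) ≤ ∑' j : ℕ, G j s := by
    intro s hs
    obtain ⟨hs1, hs2⟩ := hs
    have hs0 : (0:ℝ) < s := lt_trans hs₀0 hs1
    have hex2 : ∃ j : ℕ, s ≤ 2^(j+1) * s₀ := by
      obtain ⟨j, hj⟩ := pow_unbounded_of_one_lt (s / s₀) (one_lt_two (α := ℝ))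
      refine ⟨j, ?_⟩
      have := (div_lt_iff₀ hs₀0).1 hj
      have h2 : (2:ℝ)^j * s₀ ≤ 2^(j+1) * s₀ := by
        have : (2:ℝ)^j ≤ 2^(j+1) := pow_le_pow_right₀ one_le_two (Nat.le_succ j)
        nlinarith
      linarith
    set j₀ := Nat.find hex2 with hj₀
    have k1 : s ≤ 2^(j₀+1) * s₀ := Nat.find_spec hex2
    have k2 : (2:ℝ)^j₀ * s₀ < s := by
      rcases Nat.eq_zero_or_pos j₀ with h0 | h0
      · rw [h0]; simpa using hs1
      · obtain ⟨t, ht⟩ := Nat.exists_eq_succ_of_ne_zero (Nat.pos_iff_ne_zero.1 h0)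
        have := Nat.find_min hex2 (by omega : t < j₀)
        push_neg at this
        rw [ht]; exact this
    have hcond : (2:ℝ)^j₀ * s₀ < U := lt_of_lt_of_le k2 hs2
    have hval : G j₀ s = ENNReal.ofReal (((2:ℝ)^(j₀+1) * s₀)^n) := by
      rw [hG]; dsimp only
      rw [if_pos hcond]
      exact Set.indicator_of_mem (k2 : s ∈ Set.Ioi ((2:ℝ)^j₀ * s₀))
        fun _ => ENNReal.ofReal (((2:ℝ)^(j₀+1) * s₀)^n)
    calc ENNReal.ofReal (s^n) ≤ ENNReal.ofReal (((2:ℝ)^(j₀+1) * s₀)^n) :=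
          ENNReal.ofReal_le_ofReal (pow_le_pow_left₀ (le_of_lt hs0) k1 n)
      _ = G j₀ s := hval.symm
      _ ≤ ∑' j : ℕ, G j s := ENNReal.le_tsum j₀
  -- rewrite integral
  have hrw : ∫ s in Set.Ioc s₀ U, (s:ℝ)^n ∂F
      = (∫⁻ s in Set.Ioc s₀ U, ENNReal.ofReal (s^n) ∂F).toReal := by
    rw [integral_eq_lintegral_of_nonneg_ae]
    · exact (ae_restrict_iff' measurableSet_Ioc).2
        (ae_of_all _ fun s hs => pow_nonneg (le_of_lt (lt_trans hs₀0 hs.1)) n)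
    · exact (measurable_id.pow_const n).aestronglyMeasurable
  rw [hrw]
  refine ENNReal.toReal_le_of_le_ofReal (by positivity) ?_
  have hcast : ∀ j : ℕ, ((2:ℝ)^j * s₀ < U) → (j < N + 1) := by
    intro j hj
    by_contra hcon
    push_neg at hcon
    have : (2:ℝ)^(N+1) ≤ (2:ℝ)^j := pow_le_pow_right₀ one_le_two hcon
    nlinarith
  calc ∫⁻ s in Set.Ioc s₀ U, ENNReal.ofReal (s^n) ∂F
      ≤ ∫⁻ s in Set.Ioc s₀ U, (∑' j : ℕ, G j s) ∂F :=
        setLIntegral_mono (Measurable.ennreal_tsum hGmeas) cover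
    _ ≤ ∫⁻ s, (∑' j : ℕ, G j s) ∂F := setLIntegral_le_lintegral _ _
    _ = ∑' j : ℕ, ∫⁻ s, G j s ∂F := lintegral_tsum fun j => (hGmeas j).aemeasurable
    _ ≤ ∑' j : ℕ, (if j < N + 1 then ENNReal.ofReal (A * 2^((j:ℝ)*((n:ℝ)-β))) else 0) := by
        refine ENNReal.tsum_le_tsum fun j => ?_
        rw [hG]; dsimp only
        split_ifs with hcond hj hj
        · rw [lintegral_indicator_const measurableSet_Ioi]
          have h2j : (1:ℝ) ≤ (2:ℝ)^j := one_le_pow₀ one_le_two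
          have hsj : s₀ ≤ (2:ℝ)^j * s₀ := by nlinarith
          have hsj0 : (0:ℝ) < (2:ℝ)^j * s₀ := by nlinarith
          calc ENNReal.ofReal (((2:ℝ)^(j+1) * s₀)^n) * F (Set.Ioi ((2:ℝ)^j * s₀))
              ≤ ENNReal.ofReal (((2:ℝ)^(j+1) * s₀)^n)
                * ENNReal.ofReal (c₂ * ((2:ℝ)^j * s₀) ^ (-β)) :=
                mul_le_mul_right (htail _ hsj) _
            _ = ENNReal.ofReal ((((2:ℝ)^(j+1) * s₀)^n) * (c₂ * ((2:ℝ)^j * s₀) ^ (-β))) := by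
                rw [← ENNReal.ofReal_mul (by positivity)]
            _ = ENNReal.ofReal (A * 2^((j:ℝ)*((n:ℝ)-β))) := by
                congr 1
                have e0 : ((2:ℝ)^(j+1) * s₀)^n = 2^n * ((2:ℝ)^j * s₀)^n := by
                  rw [pow_succ]; ring
                have e1 : ((2:ℝ)^j * s₀ : ℝ)^n = ((2:ℝ)^j * s₀) ^ ((n:ℝ)) := by
                  rw [Real.rpow_natCast]
                have e2 : ((2:ℝ)^j * s₀) ^ ((n:ℝ)) * ((2:ℝ)^j * s₀) ^ (-β)
                    = ((2:ℝ)^j * s₀) ^ ((n:ℝ) - β) := by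
                  rw [← Real.rpow_add hsj0]; ring_nf
                have e3 : ((2:ℝ)^j * s₀) ^ ((n:ℝ) - β)
                    = 2^((j:ℝ)*((n:ℝ)-β)) * s₀ ^ ((n:ℝ) - β) := by
                  rw [Real.mul_rpow (by positivity) (le_of_lt hs₀0),
                    ← Real.rpow_natCast (2:ℝ) j,
                    ← Real.rpow_mul (by norm_num : (0:ℝ) ≤ 2)]
                calc ((2:ℝ)^(j+1) * s₀)^n * (c₂ * ((2:ℝ)^j * s₀) ^ (-β))
                    = 2^n * c₂ * (((2:ℝ)^j * s₀)^((n:ℝ)) * ((2:ℝ)^j * s₀) ^ (-β)) := by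
                      rw [e0, ← e1]; ring
                  _ = 2^n * c₂ * (2^((j:ℝ)*((n:ℝ)-β)) * s₀ ^ ((n:ℝ) - β)) := by
                      rw [e2, e3]
                  _ = A * 2^((j:ℝ)*((n:ℝ)-β)) := by rw [hA]; ring
        · exact absurd (hcast j hcond) hj
        all_goals simp
    _ = ∑ j ∈ Finset.range (N+1), ENNReal.ofReal (A * 2^((j:ℝ)*((n:ℝ)-β))) := by
        rw [tsum_eq_sum (s := Finset.range (N+1))]
        · refine Finset.sum_congr rfl fun j hj => ?_
          rw [if_pos (Finset.mem_range.1 hj)]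
        · intro j hj
          rw [if_neg (fun hc => hj (Finset.mem_range.2 hc))]
    _ = ENNReal.ofReal (∑ j ∈ Finset.range (N+1), A * 2^((j:ℝ)*((n:ℝ)-β))) := by
        rw [ENNReal.ofReal_sum_of_nonneg]
        intro j _
        positivity
    _ ≤ ENNReal.ofReal ((1 + 2/ρ) * 2^n * c₂ * s₀ ^ ((n:ℝ) - β) * (U/s₀) ^ ρ) := by
        refine ENNReal.ofReal_le_ofReal ?_
        rw [← Finset.mul_sum]
        have hgeo := geom_sum_bound ((n:ℝ)-β) ρ hρ hρ2 N
        have h2N : (2:ℝ)^((N:ℝ)*ρ) ≤ (U/s₀)^ρ := by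
          have h2Nr : ((2:ℝ)^N : ℝ) ≤ U/s₀ := by
            rw [le_div_iff₀ hs₀0]; exact keyN2
          calc (2:ℝ)^((N:ℝ)*ρ) = ((2:ℝ)^N)^ρ := by
                rw [← Real.rpow_natCast (2:ℝ) N,
                  ← Real.rpow_mul (by norm_num : (0:ℝ) ≤ 2)]
            _ ≤ (U/s₀)^ρ := Real.rpow_le_rpow (by positivity) h2Nr (le_of_lt hρ)
        have hsum' : ∑ j ∈ Finset.range (N+1), (2:ℝ)^((j:ℝ)*((n:ℝ)-β))
            ≤ (1 + 2/ρ) * (U/s₀)^ρ := by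
          calc ∑ j ∈ Finset.range (N+1), (2:ℝ)^((j:ℝ)*((n:ℝ)-β))
              ≤ (1 + 2/ρ) * 2^((N:ℝ)*ρ) := hgeo
            _ ≤ (1 + 2/ρ) * (U/s₀)^ρ := by
                refine mul_le_mul_of_nonneg_left h2N ?_
                positivity
        calc A * ∑ j ∈ Finset.range (N+1), (2:ℝ)^((j:ℝ)*((n:ℝ)-β))
            ≤ A * ((1 + 2/ρ) * (U/s₀)^ρ) := mul_le_mul_of_nonneg_left hsum' hA0
          _ = (1 + 2/ρ) * 2^n * c₂ * s₀ ^ ((n:ℝ) - β) * (U/s₀) ^ ρ := by rw [hA]; ring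

lemma chunk_bound {q k γ β : ℝ} (hq0 : 0 < q) (hq1 : q ≤ 1) (hk1 : 1 ≤ k)
    (hqk : q ≤ k ^ (-γ)) (hγ : 6 ≤ γ) {H a A t : ℝ} (ht : 0 ≤ t)
    (hA : β + t ≤ A) (haH : a - 6*t ≤ H) :
    k ^ a * q ^ A ≤ k ^ H * q ^ β := by
  have hk0 : (0:ℝ) < k := lt_of_lt_of_le one_pos hk1
  have hX0 : (0:ℝ) < q ^ β := Real.rpow_pos_of_pos hq0 β
  have h1 : q ^ A ≤ q ^ (β + t) := Real.rpow_le_rpow_of_exponent_ge hq0 hq1 hA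
  have h2 : q ^ (β + t) = q ^ t * q ^ β := by rw [Real.rpow_add hq0]; ring
  have h3 : q ^ t ≤ (k ^ (-γ)) ^ t := Real.rpow_le_rpow hq0.le hqk ht
  have h4 : (k ^ (-γ)) ^ t = k ^ (-γ * t) := by rw [← Real.rpow_mul hk0.le]
  have h5 : k ^ (-γ * t) ≤ k ^ (-(6 * t)) :=
    Real.rpow_le_rpow_of_exponent_le hk1 (by nlinarith)
  have h6 : q ^ t ≤ k ^ (-(6*t)) := h3.trans (h4 ▸ h5)
  calc k ^ a * q ^ A ≤ k ^ a * (q ^ t * q ^ β) := by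
        rw [← h2]; exact mul_le_mul_of_nonneg_left h1 (Real.rpow_pos_of_pos hk0 a).le
    _ ≤ k ^ a * (k ^ (-(6*t)) * q ^ β) :=
        mul_le_mul_of_nonneg_left (mul_le_mul_of_nonneg_right h6 hX0.le)
          (Real.rpow_pos_of_pos hk0 a).le
    _ = k ^ (a + -(6*t)) * q ^ β := by rw [Real.rpow_add hk0]; ring
    _ ≤ k ^ H * q ^ β :=
        mul_le_mul_of_nonneg_right
          (Real.rpow_le_rpow_of_exponent_le hk1 (by linarith)) hX0.le

set_option maxHeartbeats 2000000 in
/-- Bound for a nontrivial partition (`m ≥ 2` blocks of sizes `h₁,…,h_m` with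
`h_T = h₁ + ⋯ + h_m ≥ 5`) in the critical case `β = D/(D-1)`:
`(3k)^{m-1} (∏_{ℓ=1}^{m-1} ∫ J_{h_ℓ} dF) ∫ (k+s) J_{h_m}(s) dF(s)
  ≤ 81 D² (c₂+1)² s₀^{2h_T} h_T^{h_T} (3k)^{h_T} q^{D/(D-1)}`. -/
theorem decay_of_tails_jsq_stmt14
    (D : ℕ) (hD : 2 ≤ D) (c₂ s₀ : ℝ) (hc₂ : 0 < c₂) (hs₀ : 1 ≤ s₀)
    (F : Measure ℝ) [IsProbabilityMeasure F]
    (hsupp : F (Set.Ici (0:ℝ))ᶜ = 0) (hmean : ∫ s, s ∂F = 1)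
    (htail : ∀ s : ℝ, s₀ ≤ s →
      F (Set.Ioi s) ≤ ENNReal.ofReal (c₂ * s ^ (-((D:ℝ) / ((D:ℝ) - 1)))))
    (m : ℕ) (hm : 2 ≤ m) (h : ℕ → ℕ) (hpos : ∀ ℓ < m, 1 ≤ h ℓ)
    (hT : ℕ) (hhT : hT = ∑ ℓ ∈ Finset.range m, h ℓ) (hT5 : 5 ≤ hT)
    (k : ℝ)
    (hk : (D:ℝ) * max c₂ c₂⁻¹ * s₀ ^ (2 * hT) * (hT:ℝ) ^ (hT + 1) ≤ k)
    (q : ℝ) (hq0 : 0 < q)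
    (hq : q ≤ min c₂ (k ^ (-(((D:ℝ) - 1) * ((hT:ℝ) + 1))))) :
    (3 * k) ^ (m - 1) * (∏ ℓ ∈ Finset.range (m - 1), ∫ s, jsqPoissonTail q (h ℓ) s ∂F) *
        ∫ s, (k + s) * jsqPoissonTail q (h (m - 1)) s ∂F ≤
      81 * (D:ℝ) ^ 2 * (c₂ + 1) ^ 2 * s₀ ^ (2 * hT) * (hT:ℝ) ^ hT * (3 * k) ^ hT *
        q ^ ((D:ℝ) / ((D:ℝ) - 1)) := by
  classical
  have hd2 : (2:ℝ) ≤ (D:ℝ) := by exact_mod_cast hD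
  have hd1 : (0:ℝ) < (D:ℝ) - 1 := by linarith
  obtain ⟨β, hβ⟩ : ∃ β : ℝ, β = (D:ℝ)/((D:ℝ)-1) := ⟨_, rfl⟩
  rw [show (D:ℝ)/((D:ℝ)-1) = β from hβ.symm]
  have htail' : ∀ s : ℝ, s₀ ≤ s → F (Set.Ioi s) ≤ ENNReal.ofReal (c₂ * s ^ (-β)) := by
    intro s hs; rw [hβ]; exact htail s hs
  have hβ1 : 1 < β := by rw [hβ, lt_div_iff₀ hd1]; linarith
  have hβ2 : β ≤ 2 := by rw [hβ, div_le_iff₀ hd1]; linarith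
  have hs₀0 : (0:ℝ) < s₀ := lt_of_lt_of_le one_pos hs₀
  have hH5 : (5:ℝ) ≤ (hT:ℝ) := by exact_mod_cast hT5
  have hm2 : (2:ℝ) ≤ (m:ℝ) := by exact_mod_cast hm
  have hmhT : m ≤ hT := by
    have h1 : ∑ ℓ ∈ Finset.range m, 1 ≤ ∑ ℓ ∈ Finset.range m, h ℓ :=
      Finset.sum_le_sum fun ℓ hl => hpos ℓ (Finset.mem_range.1 hl)
    simpa [hhT] using h1
  have hmhTr : (m:ℝ) ≤ (hT:ℝ) := by exact_mod_cast hmhT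
  obtain ⟨m', rfl⟩ : ∃ m', m = m' + 1 := ⟨m - 1, by omega⟩
  have hm'1 : 1 ≤ m' := by omega
  have hm'r : (1:ℝ) ≤ (m':ℝ) := by exact_mod_cast hm'1
  have hm'hT : m' + 1 ≤ hT := hmhT
  have hm'hTr : (m':ℝ) + 1 ≤ (hT:ℝ) := by exact_mod_cast hm'hT
  simp only [Nat.add_sub_cancel]
  -- k facts
  have hM1 : (1:ℝ) ≤ max c₂ c₂⁻¹ := by
    rcases le_total c₂ 1 with hcc | hcc
    · exact le_max_of_le_right (one_le_inv_iff₀.2 ⟨hc₂, hcc⟩)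
    · exact le_max_of_le_left hcc
  have hSpow1 : (1:ℝ) ≤ s₀ ^ (2*hT) := one_le_pow₀ hs₀
  have hTpow1 : (1:ℝ) ≤ (hT:ℝ) ^ (hT+1) := one_le_pow₀ (by linarith)
  have hTpow0 : (1:ℝ) ≤ (hT:ℝ) ^ hT := one_le_pow₀ (by linarith)
  have hDM : (2:ℝ) ≤ (D:ℝ) * (max c₂ c₂⁻¹) := by
    calc (2:ℝ) = 2*1 := by ring
      _ ≤ (D:ℝ) * (max c₂ c₂⁻¹) := mul_le_mul hd2 hM1 (by norm_num) (by linarith)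
  have hDM0 : (0:ℝ) ≤ (D:ℝ) * (max c₂ c₂⁻¹) := by linarith
  have hprod2 : s₀ ^ (2*hT) ≤ ((D:ℝ) * max c₂ c₂⁻¹) * s₀ ^ (2*hT) * (hT:ℝ)^(hT+1) := by
    have p4 : 1 * s₀^(2*hT) ≤ ((D:ℝ) * max c₂ c₂⁻¹) * s₀^(2*hT) :=
      mul_le_mul_of_nonneg_right (by linarith) (by linarith)
    have p5 : ((D:ℝ) * max c₂ c₂⁻¹) * s₀^(2*hT) * 1
        ≤ ((D:ℝ) * max c₂ c₂⁻¹) * s₀^(2*hT) * (hT:ℝ)^(hT+1) :=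
      mul_le_mul_of_nonneg_left hTpow1 (by nlinarith)
    nlinarith
  have hk2 : (2:ℝ) ≤ k := by
    have p6 : (2:ℝ) * 1 * 1 ≤ ((D:ℝ) * max c₂ c₂⁻¹) * s₀^(2*hT) * (hT:ℝ)^(hT+1) := by
      have := mul_le_mul (mul_le_mul hDM hSpow1 (by norm_num) hDM0) hTpow1 (by norm_num)
        (by positivity)
      linarith [this]
    linarith [hk, p6]
  have hk1 : (1:ℝ) ≤ k := by linarith
  have hk0 : (0:ℝ) < k := by linarith
  have hs₀k : s₀ ≤ k := by
    have h1 : s₀ ≤ s₀ ^ (2*hT) := le_self_pow₀ hs₀ (by omega)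
    linarith [hprod2, hk]
  obtain ⟨γ, hγ⟩ : ∃ γ : ℝ, γ = ((D:ℝ)-1)*((hT:ℝ)+1) := ⟨_, rfl⟩
  have hγ6 : (6:ℝ) ≤ γ := by rw [hγ]; nlinarith
  have hqk : q ≤ k ^ (-γ) := by
    have h1 := le_trans hq (min_le_right _ _)
    rw [hγ]; exact h1
  have hq1 : q ≤ 1 := hqk.trans (Real.rpow_le_one_of_one_le_of_nonpos hk1 (by linarith))
  have hq6 : q ≤ k ^ (-(6:ℝ)) :=
    hqk.trans (Real.rpow_le_rpow_of_exponent_le hk1 (by linarith))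
  have hqs₀inv : q ≤ s₀⁻¹ := by
    have h2 : k ^ (-γ) ≤ k ^ (-(1:ℝ)) :=
      Real.rpow_le_rpow_of_exponent_le hk1 (by linarith)
    have h3 : k ^ (-(1:ℝ)) = k⁻¹ := Real.rpow_neg_one k
    have h4 : k⁻¹ ≤ s₀⁻¹ := inv_anti₀ hs₀0 hs₀k
    calc q ≤ k ^ (-γ) := hqk
      _ ≤ k ^ (-(1:ℝ)) := h2
      _ = k⁻¹ := h3
      _ ≤ s₀⁻¹ := h4
  have hUs₀ : s₀ ≤ q⁻¹ := by
    have h1 : s₀ * q ≤ s₀ * s₀⁻¹ := mul_le_mul_of_nonneg_left hqs₀inv hs₀0.le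
    rw [mul_inv_cancel₀ (ne_of_gt hs₀0)] at h1
    calc s₀ = s₀ * q * q⁻¹ := by field_simp
      _ ≤ 1 * q⁻¹ := mul_le_mul_of_nonneg_right h1 (inv_nonneg.2 hq0.le)
      _ = q⁻¹ := one_mul _
  have hU0 : (0:ℝ) < q⁻¹ := inv_pos.2 hq0
  -- a.e. nonneg and integrability
  have hae : ∀ᵐ s ∂F, (0:ℝ) ≤ s := by
    refine ae_iff.2 ?_
    have hset : {a : ℝ | ¬ (0:ℝ) ≤ a} = (Set.Ici (0:ℝ))ᶜ := by
      ext a; simp [Set.mem_Ici]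
    rw [hset]; exact hsupp
  have hid : Integrable (fun s : ℝ => s) F := by
    by_contra hcon
    rw [integral_undef hcon] at hmean
    norm_num at hmean
  have hqs : ∀ᵐ s ∂F, 0 ≤ q * s := hae.mono fun s hs => mul_nonneg hq0.le hs
  have hJmeas : ∀ nn : ℕ, AEStronglyMeasurable (fun s => jsqPoissonTail q nn s) F :=
    fun nn => ((jsq_continuous q nn).measurable).aestronglyMeasurable
  have hJint : ∀ nn : ℕ, Integrable (fun s => jsqPoissonTail q nn s) F := by
    intro nn
    refine Integrable.mono' (integrable_const (1:ℝ)) (hJmeas nn) ?_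
    filter_upwards [hqs] with s hs
    rw [Real.norm_eq_abs, abs_le]
    exact ⟨by linarith [jsq_nonneg nn hs], jsq_le_one nn hs⟩
  have hJnonneg : ∀ nn : ℕ, 0 ≤ ∫ s, jsqPoissonTail q nn s ∂F := fun nn =>
    integral_nonneg_of_ae (hqs.mono fun s hs => jsq_nonneg nn hs)
  have hblock : ∀ nn : ℕ, 1 ≤ nn → ∫ s, jsqPoissonTail q nn s ∂F ≤ q := by
    intro nn hnn
    calc ∫ s, jsqPoissonTail q nn s ∂F ≤ ∫ s, q * s ∂F :=
        integral_mono_ae (hJint nn) (hid.const_mul q)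
          (hqs.mono fun s hs => jsq_le_lin nn hnn hs)
      _ = q * ∫ s, s ∂F := integral_const_mul q _
      _ = q := by rw [hmean, mul_one]
  -- the last integral
  set n : ℕ := h m' with hn
  have hn1 : 1 ≤ n := hpos m' (by omega)
  have hn1r : (1:ℝ) ≤ (n:ℝ) := by exact_mod_cast hn1
  have hsum_split : hT = (∑ ℓ ∈ Finset.range m', h ℓ) + n := by
    rw [hhT, Finset.sum_range_succ, hn]
  have hone_le : 1 ≤ ∑ ℓ ∈ Finset.range m', h ℓ := by
    have h4 := Finset.single_le_sum (f := h) (fun i _ => Nat.zero_le _)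
      (Finset.mem_range.2 (show 0 < m' by omega))
    have h3 : 1 ≤ h 0 := hpos 0 (by omega)
    omega
  have hn_hT : n + 1 ≤ hT := by omega
  have hsJint : Integrable (fun s => s * jsqPoissonTail q n s) F := by
    refine Integrable.mono' hid.abs
      ((continuous_id.mul (jsq_continuous q n)).measurable.aestronglyMeasurable) ?_
    filter_upwards [hqs] with s hs
    rw [Real.norm_eq_abs, abs_mul]
    have hJ1 : |jsqPoissonTail q n s| ≤ 1 :=
      abs_le.2 ⟨by linarith [jsq_nonneg n hs], jsq_le_one n hs⟩
    calc |s| * |jsqPoissonTail q n s| ≤ |s| * 1 :=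
        mul_le_mul_of_nonneg_left hJ1 (abs_nonneg s)
      _ = |s| := mul_one _
  have hfun : (fun s => (k + s) * jsqPoissonTail q n s)
      = fun s => k * jsqPoissonTail q n s + s * jsqPoissonTail q n s := by
    funext s; ring
  have hLsplit : ∫ s, (k + s) * jsqPoissonTail q n s ∂F
      = k * (∫ s, jsqPoissonTail q n s ∂F) + ∫ s, s * jsqPoissonTail q n s ∂F := by
    rw [hfun, integral_add ((hJint n).const_mul k) hsJint, integral_const_mul]
  have hL0 : 0 ≤ ∫ s, (k + s) * jsqPoissonTail q n s ∂F := by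
    refine integral_nonneg_of_ae ?_
    filter_upwards [hae, hqs] with s h1 h2
    exact mul_nonneg (by linarith) (jsq_nonneg n h2)
  -- split of ∫ s J
  have hsplit1 : ∫ s, s * jsqPoissonTail q n s ∂F
      = (∫ s in Set.Iic q⁻¹, s * jsqPoissonTail q n s ∂F)
        + ∫ s in Set.Ioi q⁻¹, s * jsqPoissonTail q n s ∂F := by
    rw [← Set.compl_Iic]
    exact (integral_add_compl measurableSet_Iic hsJint).symm
  have hsplit2 : ∫ s in Set.Iic q⁻¹, s * jsqPoissonTail q n s ∂F
      = (∫ s in Set.Iic s₀, s * jsqPoissonTail q n s ∂F)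
        + ∫ s in Set.Ioc s₀ q⁻¹, s * jsqPoissonTail q n s ∂F := by
    rw [← Set.Iic_union_Ioc_eq_Iic hUs₀,
      setIntegral_union (Set.Iic_disjoint_Ioc le_rfl) measurableSet_Ioc
        hsJint.integrableOn hsJint.integrableOn]
  have hA1 : ∫ s in Set.Iic s₀, s * jsqPoissonTail q n s ∂F ≤ (q*s₀)^n := by
    have hstep : ∫ s in Set.Iic s₀, s * jsqPoissonTail q n s ∂F
        ≤ ∫ s in Set.Iic s₀, (q*s₀)^n * s ∂F := by
      refine integral_mono_ae hsJint.integrableOn ((hid.const_mul _).integrableOn) ?_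
      have hres : ∀ᵐ s ∂F.restrict (Set.Iic s₀), s ≤ s₀ :=
        (ae_restrict_iff' measurableSet_Iic).2 (ae_of_all _ fun s hs => hs)
      filter_upwards [hres, ae_restrict_of_ae hqs, ae_restrict_of_ae hae] with s h1 h2 h3
      have hJp := jsq_le_pow n h2
      have hqq : (q*s)^n ≤ (q*s₀)^n :=
        pow_le_pow_left₀ h2 (mul_le_mul_of_nonneg_left h1 hq0.le) n
      calc s * jsqPoissonTail q n s ≤ s * (q*s)^n :=
            mul_le_mul_of_nonneg_left hJp h3
        _ ≤ s * (q*s₀)^n := mul_le_mul_of_nonneg_left hqq h3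
        _ = (q*s₀)^n * s := mul_comm _ _
    have h2 : ∫ s in Set.Iic s₀, (q*s₀)^n * s ∂F
        = (q*s₀)^n * ∫ s in Set.Iic s₀, s ∂F := integral_const_mul _ _
    have h3 : ∫ s in Set.Iic s₀, s ∂F ≤ ∫ s, s ∂F := setIntegral_le_integral hid hae
    calc ∫ s in Set.Iic s₀, s * jsqPoissonTail q n s ∂F
        ≤ (q*s₀)^n * ∫ s in Set.Iic s₀, s ∂F := by rw [← h2]; exact hstep
      _ ≤ (q*s₀)^n * ∫ s, s ∂F :=
          mul_le_mul_of_nonneg_left h3 (by positivity)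
      _ = (q*s₀)^n := by rw [hmean, mul_one]
  have hIocPow : ∀ j : ℕ, IntegrableOn (fun s : ℝ => s^j) (Set.Ioc s₀ q⁻¹) F := by
    intro j
    refine Integrable.mono' (integrable_const ((q⁻¹)^j))
      ((measurable_id.pow_const j).aestronglyMeasurable) ?_
    refine (ae_restrict_iff' measurableSet_Ioc).2 (ae_of_all _ fun s hs => ?_)
    have h1 : (0:ℝ) < s := lt_trans hs₀0 hs.1
    rw [Real.norm_eq_abs, abs_of_nonneg (by positivity)]
    exact pow_le_pow_left₀ h1.le hs.2 j
  have hA2 : ∫ s in Set.Ioc s₀ q⁻¹, s * jsqPoissonTail q n s ∂F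
      ≤ q^n * ∫ s in Set.Ioc s₀ q⁻¹, s^(n+1) ∂F := by
    rw [← integral_const_mul]
    refine setIntegral_mono_on hsJint.integrableOn ((hIocPow (n+1)).const_mul _)
      measurableSet_Ioc (fun s hs => ?_)
    have h0 : (0:ℝ) < s := lt_trans hs₀0 hs.1
    have hx : 0 ≤ q*s := by positivity
    calc s * jsqPoissonTail q n s ≤ s * (q*s)^n :=
          mul_le_mul_of_nonneg_left (jsq_le_pow n hx) h0.le
      _ = q^n * s^(n+1) := by rw [mul_pow, pow_succ]; ring
  have hA3 : ∫ s in Set.Ioi q⁻¹, s * jsqPoissonTail q n s ∂F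
      ≤ 6*((D:ℝ)-1)*c₂ * (q⁻¹) ^ ((1:ℝ)-β) := by
    have h1 : ∫ s in Set.Ioi q⁻¹, s * jsqPoissonTail q n s ∂F
        ≤ ∫ s in Set.Ioi q⁻¹, s ∂F := by
      refine setIntegral_mono_on hsJint.integrableOn hid.integrableOn
        measurableSet_Ioi (fun s hs => ?_)
      have h0 : (0:ℝ) < s := lt_trans hU0 hs
      have hx : 0 ≤ q*s := by positivity
      calc s * jsqPoissonTail q n s ≤ s * 1 :=
            mul_le_mul_of_nonneg_left (jsq_le_one n hx) h0.le
        _ = s := mul_one _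
    refine h1.trans ?_
    have := tail_int_bound D hD c₂ s₀ hc₂ hs₀ F htail q⁻¹ hUs₀
    rw [← hβ] at this
    exact this
  have hUpow : (q⁻¹) ^ ((1:ℝ)-β) = q ^ (β-1) := by
    rw [Real.inv_rpow hq0.le, ← Real.rpow_neg hq0.le]
    ring_nf
  -- tooling for the final arithmetic
  have hnatq : ∀ j : ℕ, (q:ℝ)^j = q ^ ((j:ℝ)) := fun j => (Real.rpow_natCast q j).symm
  have hnatk : ∀ j : ℕ, (k:ℝ)^j = k ^ ((j:ℝ)) := fun j => (Real.rpow_natCast k j).symm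
  have hCB : ∀ (a A t : ℝ), 0 ≤ t → β + t ≤ A → a - 6*t ≤ (hT:ℝ) →
      k ^ a * q ^ A ≤ k ^ ((hT:ℝ)) * q ^ β :=
    fun a A t ht hA haH => chunk_bound hq0 hq1 hk1 hqk hγ6 ht hA haH
  obtain ⟨Z, hZ⟩ : ∃ Z:ℝ, Z = (3:ℝ)^hT * (k ^ ((hT:ℝ)) * q ^ β) := ⟨_, rfl⟩
  have hZstep : ∀ (c C a A t : ℝ), 0 ≤ c → c ≤ 3^hT * C → 0 ≤ t → β + t ≤ A →
      a - 6*t ≤ (hT:ℝ) → c * (k ^ a * q ^ A) ≤ C * Z := by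
    intro c C a A t hc0 hcC ht hA haH
    have h2 := chunk_bound (γ := γ) (β := β) hq0 hq1 hk1 hqk hγ6 ht hA haH
    calc c * (k ^ a * q ^ A) ≤ c * (k ^ ((hT:ℝ)) * q ^ β) :=
        mul_le_mul_of_nonneg_left h2 hc0
      _ ≤ (3^hT * C) * (k ^ ((hT:ℝ)) * q ^ β) :=
        mul_le_mul_of_nonneg_right hcC (by positivity)
      _ = C * Z := by rw [hZ]; ring
  have hk1e : k ^ ((1:ℝ)) = k := Real.rpow_one k
  have hk2e : k ^ ((2:ℝ)) = k*k := by
    rw [show ((2:ℝ)) = ((2:ℕ):ℝ) by norm_num, Real.rpow_natCast]; ring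
  have hs₀self : s₀ ≤ s₀^(2*hT) := le_self_pow₀ hs₀ (by omega)
  obtain ⟨E, hE⟩ : ∃ E:ℝ, E = (D:ℝ)^2 * (c₂+1)^2 * (s₀^(2*hT) * (hT:ℝ)^hT) := ⟨_, rfl⟩
  have hXpos : (0:ℝ) < q ^ β := Real.rpow_pos_of_pos hq0 β
  have hZ0 : 0 ≤ Z := by rw [hZ]; positivity
  have hSSTT : (1:ℝ) ≤ s₀^(2*hT) * (hT:ℝ)^hT :=
    le_trans hSpow1 (le_mul_of_one_le_right (by positivity) hTpow0)
  have hcc1 : (1:ℝ) ≤ (c₂+1)^2 := one_le_pow₀ (by linarith only [hc₂])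
  have hcc2 : c₂ ≤ (c₂+1)^2 := by
    have h1 := sq_nonneg c₂
    have h2 : (c₂+1)^2 = c₂^2 + 2*c₂ + 1 := by ring
    linarith only [h1, h2, hc₂]
  have hd4 : (4:ℝ) ≤ (D:ℝ)^2 := by
    calc (4:ℝ) = 2*2 := by norm_num
      _ ≤ (D:ℝ)*(D:ℝ) := mul_le_mul hd2 hd2 (by norm_num) (by linarith only [hd2])
      _ = (D:ℝ)^2 := (pow_two _).symm
  have hdd : (D:ℝ) ≤ (D:ℝ)^2 := by
    calc (D:ℝ) = (D:ℝ)*1 := by ring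
      _ ≤ (D:ℝ)*(D:ℝ) := mul_le_mul_of_nonneg_left (by linarith only [hd2]) (by linarith only [hd2])
      _ = (D:ℝ)^2 := (pow_two _).symm
  have hdc1 : (1:ℝ) ≤ (D:ℝ)^2 * (c₂+1)^2 := by
    calc (1:ℝ) = 1*1 := by ring
      _ ≤ (D:ℝ)^2 * (c₂+1)^2 :=
        mul_le_mul (by linarith only [hd4]) hcc1 (by norm_num) (by positivity)
  have hE1 : (1:ℝ) ≤ E := by
    rw [hE]
    calc (1:ℝ) = 1*1 := by ring
      _ ≤ ((D:ℝ)^2 * (c₂+1)^2) * (s₀^(2*hT) * (hT:ℝ)^hT) :=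
          mul_le_mul hdc1 hSSTT (by norm_num) (by positivity)
      _ = (D:ℝ)^2 * (c₂+1)^2 * (s₀^(2*hT) * (hT:ℝ)^hT) := by ring
  have hE0 : (0:ℝ) ≤ E := by linarith
  have hRHSeq : 81 * (D:ℝ)^2 * (c₂+1)^2 * s₀^(2*hT) * (hT:ℝ)^hT * (3*k)^hT * q^β
      = (81 * E) * Z := by rw [hE, hZ, mul_pow, hnatk hT]; ring
  have h3hT : ∀ j : ℕ, j ≤ hT → (3:ℝ)^j ≤ 3^hT :=
    fun j hj => pow_le_pow_right₀ (by norm_num) hj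
  have h2hT2 : (2:ℝ)^(2*hT) ≤ (hT:ℝ)^hT := by
    have d3 : (2:ℝ)^(2*hT) = 4^hT := by rw [pow_mul]; norm_num
    have d4 : (4:ℝ)^hT ≤ (hT:ℝ)^hT := pow_le_pow_left₀ (by norm_num) (by linarith) hT
    linarith
  have h2le : ∀ j : ℕ, j ≤ 2*hT → (2:ℝ)^j ≤ (hT:ℝ)^hT := fun j hj =>
    le_trans (pow_le_pow_right₀ one_le_two hj) h2hT2
  have hs₀le : ∀ j : ℕ, j ≤ 2*hT → s₀^j ≤ s₀^(2*hT) := fun j hj =>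
    pow_le_pow_right₀ hs₀ hj
  have h243 : (243:ℝ) ≤ 3^hT := by
    calc (243:ℝ) = 3^5 := by norm_num
      _ ≤ 3^hT := pow_le_pow_right₀ (by norm_num) hT5
  have hEv2 : s₀^(2*hT) ≤ E := by
    rw [hE]
    calc s₀^(2*hT) = 1 * (s₀^(2*hT) * 1) := by ring
      _ ≤ ((D:ℝ)^2 * (c₂+1)^2) * (s₀^(2*hT) * (hT:ℝ)^hT) := by
          refine mul_le_mul hdc1 ?_ (by positivity) (by positivity)
          exact mul_le_mul_of_nonneg_left hTpow0 (by positivity)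
      _ = (D:ℝ)^2 * (c₂+1)^2 * (s₀^(2*hT) * (hT:ℝ)^hT) := by ring
  have hEdc : (D:ℝ)*c₂*(hT:ℝ)^hT ≤ E := by
    rw [hE]
    have w1 : (D:ℝ)*c₂ ≤ (D:ℝ)^2*(c₂+1)^2 :=
      mul_le_mul hdd hcc2 hc₂.le (by positivity)
    calc (D:ℝ)*c₂*(hT:ℝ)^hT = ((D:ℝ)*c₂) * (1 * (hT:ℝ)^hT) := by ring
      _ ≤ ((D:ℝ)^2*(c₂+1)^2) * (s₀^(2*hT) * (hT:ℝ)^hT) := by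
          refine mul_le_mul w1 ?_ (by positivity) (by positivity)
          exact mul_le_mul_of_nonneg_right hSpow1 (by positivity)
      _ = (D:ℝ)^2 * (c₂+1)^2 * (s₀^(2*hT) * (hT:ℝ)^hT) := by ring
  -- bound on the product of the first m' blocks
  have hPq : (∏ ℓ ∈ Finset.range m', ∫ s, jsqPoissonTail q (h ℓ) s ∂F) ≤ q^m' := by
    calc (∏ ℓ ∈ Finset.range m', ∫ s, jsqPoissonTail q (h ℓ) s ∂F)
        ≤ ∏ ℓ ∈ Finset.range m', q := by
          refine Finset.prod_le_prod (fun ℓ _ => hJnonneg _) (fun ℓ hl => ?_)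
          exact hblock _ (hpos ℓ (by have := Finset.mem_range.1 hl; omega))
      _ = q^m' := by rw [Finset.prod_const, Finset.card_range]
  have hP0 : 0 ≤ ∏ ℓ ∈ Finset.range m', ∫ s, jsqPoissonTail q (h ℓ) s ∂F :=
    Finset.prod_nonneg fun ℓ _ => hJnonneg _
  have hT1 : (3*k)^m' * q^m' * (k*q) ≤ 1 * Z := by
    have e1 : (3*k)^m' * q^m' * (k*q)
        = 3^m' * (k ^ ((m':ℝ)+1) * q ^ ((m':ℝ)+1)) := by
      rw [mul_pow, hnatk m', hnatq m',
        Real.rpow_add hk0, Real.rpow_add hq0, Real.rpow_one, Real.rpow_one]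
      ring
    rw [e1, hZ, one_mul]
    have h2 := hCB ((m':ℝ)+1) ((m':ℝ)+1) ((m':ℝ)-1) (by linarith only [hm'r])
      (by linarith only [hβ2, hm'r]) (by linarith only [hm'r, hH5])
    calc 3^m' * (k ^ ((m':ℝ)+1) * q ^ ((m':ℝ)+1))
        ≤ 3^m' * (k ^ ((hT:ℝ)) * q ^ β) := mul_le_mul_of_nonneg_left h2 (by positivity)
      _ ≤ 3^hT * (k ^ ((hT:ℝ)) * q ^ β) :=
          mul_le_mul_of_nonneg_right (h3hT m' (by omega)) (by positivity)
  have hT2 : (3*k)^m' * q^m' * (q*s₀)^n ≤ s₀^(2*hT) * Z := by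
    have e1 : (3*k)^m' * q^m' * (q*s₀)^n
        = (3^m' * s₀^n) * (k ^ ((m':ℝ)) * q ^ ((m':ℝ)+(n:ℝ))) := by
      rw [mul_pow q s₀, mul_pow 3 k, hnatk m', hnatq m', hnatq n, Real.rpow_add hq0]
      ring
    rw [e1, hZ]
    have h2 := hCB ((m':ℝ)) ((m':ℝ)+(n:ℝ)) ((m':ℝ)-1) (by linarith only [hm'r])
      (by linarith only [hβ2, hn1r]) (by linarith only [hm'r, hH5])
    have hco : 3^m' * s₀^n ≤ 3^hT * s₀^(2*hT) :=
      mul_le_mul (h3hT m' (by omega)) (hs₀le n (by omega)) (by positivity) (by positivity)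
    calc (3^m' * s₀^n) * (k ^ ((m':ℝ)) * q ^ ((m':ℝ)+(n:ℝ)))
        ≤ (3^m' * s₀^n) * (k ^ ((hT:ℝ)) * q ^ β) :=
          mul_le_mul_of_nonneg_left h2 (by positivity)
      _ ≤ (3^hT * s₀^(2*hT)) * (k ^ ((hT:ℝ)) * q ^ β) :=
          mul_le_mul_of_nonneg_right hco (by positivity)
      _ = s₀^(2*hT) * (3^hT * (k ^ ((hT:ℝ)) * q ^ β)) := by ring
  rcases Nat.lt_or_ge n 2 with hncase | hncase
  · -- CASE n = 1
    have hne : n = 1 := by omega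
    obtain ⟨ρ, hρdef⟩ : ∃ ρ:ℝ, ρ = (7-3*β)/4 := ⟨_, rfl⟩
    have hρlb : (1:ℝ)/4 ≤ ρ := by rw [hρdef]; linarith only [hβ2]
    have hρ0 : (0:ℝ) < ρ := by linarith only [hρlb]
    have hdy := dyadic_up D hD c₂ s₀ hc₂ hs₀ F htail (n+1) (by omega) q⁻¹ hUs₀ ρ hρ0
      (by rw [← hβ, hρdef, hne]; push_cast; linarith only [hβ1])
    rw [← hβ] at hdy
    have hcancel : s₀ ^ (((n+1:ℕ):ℝ) - β) * (q⁻¹/s₀) ^ ρ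
        = q ^ (-ρ) * s₀ ^ ((((n+1:ℕ):ℝ) - β) + -ρ) := by
      have e1 : q⁻¹/s₀ = (q*s₀)⁻¹ := by field_simp
      rw [e1, Real.inv_rpow (by positivity), ← Real.rpow_neg (by positivity),
        Real.mul_rpow hq0.le hs₀0.le, Real.rpow_add hs₀0]
      ring
    have hs₀small : s₀ ^ ((((n+1:ℕ):ℝ) - β) + -ρ) ≤ 1 := by
      refine Real.rpow_le_one_of_one_le_of_nonpos hs₀ ?_
      rw [hρdef, hne]; push_cast; linarith only [hβ1]
    have hmid : q^n * ∫ s in Set.Ioc s₀ q⁻¹, s^(n+1) ∂F ≤ (36*c₂) * q^(3*(β-1)/4) := by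
      have h12 : (1+2/ρ) ≤ 9 := by
        have h2ρ : 2/ρ ≤ 8 := by
          rw [div_le_iff₀ hρ0]; linarith only [hρlb]
        linarith only [h2ρ]
      have hb0 : (0:ℝ) ≤ q^(3*(β-1)/4) := (Real.rpow_pos_of_pos hq0 _).le
      calc q^n * ∫ s in Set.Ioc s₀ q⁻¹, s^(n+1) ∂F
          ≤ q^n * ((1+2/ρ) * 2^(n+1) * c₂ * s₀ ^ (((n+1:ℕ):ℝ) - β) * (q⁻¹/s₀) ^ ρ) :=
            mul_le_mul_of_nonneg_left hdy (by positivity)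
        _ = ((1+2/ρ) * 2^(n+1) * c₂) * (q ^ ((n:ℝ)) * (s₀ ^ (((n+1:ℕ):ℝ) - β) * (q⁻¹/s₀) ^ ρ)) := by
            rw [hnatq n]; ring
        _ = ((1+2/ρ) * 2^(n+1) * c₂ * s₀ ^ ((((n+1:ℕ):ℝ) - β) + -ρ)) * (q ^ ((n:ℝ)) * q ^ (-ρ)) := by
            rw [hcancel]; ring
        _ = ((1+2/ρ) * 2^(n+1) * c₂ * s₀ ^ ((((n+1:ℕ):ℝ) - β) + -ρ)) * q ^ (3*(β-1)/4) := by
            rw [← Real.rpow_add hq0, show (n:ℝ) + -ρ = 3*(β-1)/4 by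
              rw [hρdef, hne]; push_cast; ring]
        _ ≤ (36*c₂) * q^(3*(β-1)/4) := by
            refine mul_le_mul_of_nonneg_right ?_ hb0
            have hp2 : (2:ℝ)^(n+1) = 4 := by rw [hne]; norm_num
            have hs1 := hs₀small
            have hcpos : (0:ℝ) < (1+2/ρ) * 2^(n+1) * c₂ := by
              rw [hp2]; positivity
            calc (1+2/ρ) * 2^(n+1) * c₂ * s₀ ^ ((((n+1:ℕ):ℝ) - β) + -ρ)
                ≤ (1+2/ρ) * 2^(n+1) * c₂ * 1 :=
                  mul_le_mul_of_nonneg_left hs1 hcpos.le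
              _ = (1+2/ρ) * (4 * c₂) := by rw [hp2]; ring
              _ ≤ 9 * (4 * c₂) := mul_le_mul_of_nonneg_right h12 (by positivity)
              _ = 36*c₂ := by ring
    have hsJ : ∫ s, s * jsqPoissonTail q n s ∂F
        ≤ (q*s₀)^n + (36*c₂) * q^(3*(β-1)/4) + 6*((D:ℝ)-1)*c₂ * q^(β-1) := by
      have h3' := hA3
      rw [hUpow] at h3'
      have h2' := hA2.trans hmid
      rw [hsplit1, hsplit2]
      linarith only [hA1, h2', h3']
    have hLb : ∫ s, (k + s) * jsqPoissonTail q n s ∂F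
        ≤ k*q + ((q*s₀)^n + ((36*c₂) * q^(3*(β-1)/4) + 6*((D:ℝ)-1)*c₂ * q^(β-1))) := by
      rw [hLsplit]
      have h1 : k * (∫ s, jsqPoissonTail q n s ∂F) ≤ k * q :=
        mul_le_mul_of_nonneg_left (hblock n hn1) hk0.le
      linarith only [hsJ, h1]
    have hEgen : ∀ x y : ℝ, 0 ≤ x → x ≤ (D:ℝ)^2*(c₂+1)^2 → 0 ≤ y →
        y ≤ s₀^(2*hT)*(hT:ℝ)^hT → x*y ≤ E := by
      intro x y hx0 hx2 hy0 hy2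
      rw [hE]
      exact mul_le_mul hx2 hy2 hy0 (by positivity)
    rcases Nat.lt_or_ge m' 2 with hm'2 | hm'ge
    · -- SUBCASE m = 2
      have hm'eq : m' = 1 := by omega
      subst hm'eq
      have hh0 : hT = h 0 + 1 := by
        rw [hsum_split, Finset.sum_range_one, hne]
      have hh04 : 4 ≤ h 0 := by omega
      have h0r : (4:ℝ) ≤ ((h 0:ℕ):ℝ) := by exact_mod_cast hh04
      have hh0r : ((h 0:ℕ):ℝ) + 1 = (hT:ℝ) := by
        rw [hh0]; push_cast; ring
      -- block bound for ∫ J_{h 0}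
      have hJsplit1 : ∫ s, jsqPoissonTail q (h 0) s ∂F
          = (∫ s in Set.Iic q⁻¹, jsqPoissonTail q (h 0) s ∂F)
            + ∫ s in Set.Ioi q⁻¹, jsqPoissonTail q (h 0) s ∂F := by
        rw [← Set.compl_Iic]
        exact (integral_add_compl measurableSet_Iic (hJint (h 0))).symm
      have hJsplit2 : ∫ s in Set.Iic q⁻¹, jsqPoissonTail q (h 0) s ∂F
          = (∫ s in Set.Iic s₀, jsqPoissonTail q (h 0) s ∂F)
            + ∫ s in Set.Ioc s₀ q⁻¹, jsqPoissonTail q (h 0) s ∂F := by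
        rw [← Set.Iic_union_Ioc_eq_Iic hUs₀,
          setIntegral_union (Set.Iic_disjoint_Ioc le_rfl) measurableSet_Ioc
            (hJint (h 0)).integrableOn (hJint (h 0)).integrableOn]
      have hB1 : ∫ s in Set.Iic s₀, jsqPoissonTail q (h 0) s ∂F ≤ (q*s₀)^(h 0) := by
        have hstep : ∫ s in Set.Iic s₀, jsqPoissonTail q (h 0) s ∂F
            ≤ ∫ _ in Set.Iic s₀, (q*s₀)^(h 0) ∂F := by
          refine integral_mono_ae (hJint (h 0)).integrableOn
            (integrableOn_const (measure_ne_top _ _)) ?_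
          have hres : ∀ᵐ s ∂F.restrict (Set.Iic s₀), s ≤ s₀ :=
            (ae_restrict_iff' measurableSet_Iic).2 (ae_of_all _ fun s hs => hs)
          filter_upwards [hres, ae_restrict_of_ae hqs] with s h1 h2
          calc jsqPoissonTail q (h 0) s ≤ (q*s)^(h 0) := jsq_le_pow (h 0) h2
            _ ≤ (q*s₀)^(h 0) :=
              pow_le_pow_left₀ h2 (mul_le_mul_of_nonneg_left h1 hq0.le) (h 0)
        have hconst : ∫ _ in Set.Iic s₀, (q*s₀)^(h 0) ∂F
            = (F (Set.Iic s₀)).toReal * (q*s₀)^(h 0) := by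
          rw [setIntegral_const, smul_eq_mul]; rfl
        have hm1 : (F (Set.Iic s₀)).toReal ≤ 1 := by
          have h1 := prob_le_one (μ := F) (s := Set.Iic s₀)
          have h2 := ENNReal.toReal_mono (by simp) h1
          simpa using h2
        calc ∫ s in Set.Iic s₀, jsqPoissonTail q (h 0) s ∂F
            ≤ (F (Set.Iic s₀)).toReal * (q*s₀)^(h 0) := by rw [← hconst]; exact hstep
          _ ≤ 1 * (q*s₀)^(h 0) := mul_le_mul_of_nonneg_right hm1 (by positivity)
          _ = (q*s₀)^(h 0) := one_mul _
      have hB2 : ∫ s in Set.Ioc s₀ q⁻¹, jsqPoissonTail q (h 0) s ∂F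
          ≤ q^(h 0) * ∫ s in Set.Ioc s₀ q⁻¹, s^(h 0) ∂F := by
        rw [← integral_const_mul]
        refine setIntegral_mono_on (hJint (h 0)).integrableOn
          ((hIocPow (h 0)).const_mul _) measurableSet_Ioc (fun s hs => ?_)
        have h0s : (0:ℝ) < s := lt_trans hs₀0 hs.1
        have hx : 0 ≤ q*s := by positivity
        calc jsqPoissonTail q (h 0) s ≤ (q*s)^(h 0) := jsq_le_pow (h 0) hx
          _ = q^(h 0) * s^(h 0) := mul_pow q s (h 0)
      obtain ⟨ρB, hρBdef⟩ : ∃ ρB:ℝ, ρB = ((h 0:ℕ):ℝ) - β := ⟨_, rfl⟩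
      have hρB2 : (2:ℝ) ≤ ρB := by rw [hρBdef]; linarith only [h0r, hβ2]
      have hρB0 : (0:ℝ) < ρB := by linarith only [hρB2]
      have hdyB := dyadic_up D hD c₂ s₀ hc₂ hs₀ F htail (h 0) (by omega) q⁻¹ hUs₀ ρB hρB0
        (by rw [← hβ, hρBdef])
      rw [← hβ] at hdyB
      have hcancelB : s₀ ^ (((h 0:ℕ):ℝ) - β) * (q⁻¹/s₀) ^ ρB = q ^ (-ρB) := by
        have e1 : q⁻¹/s₀ = (q*s₀)⁻¹ := by field_simp
        rw [e1, Real.inv_rpow (by positivity), ← Real.rpow_neg (by positivity),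
          Real.mul_rpow hq0.le hs₀0.le]
        calc s₀ ^ (((h 0:ℕ):ℝ) - β) * (q ^ (-ρB) * s₀ ^ (-ρB))
            = q ^ (-ρB) * s₀ ^ ((((h 0:ℕ):ℝ) - β) + -ρB) := by
              rw [Real.rpow_add hs₀0]; ring
          _ = q ^ (-ρB) := by
              rw [show (((h 0:ℕ):ℝ) - β) + -ρB = 0 by rw [hρBdef]; ring,
                Real.rpow_zero, mul_one]
      have hmidB : q^(h 0) * ∫ s in Set.Ioc s₀ q⁻¹, s^(h 0) ∂F
          ≤ (2*2^(h 0)*c₂) * q^β := by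
        have h12B : (1+2/ρB) ≤ 2 := by
          have h2ρ : 2/ρB ≤ 1 := by
            rw [div_le_iff₀ hρB0]; linarith only [hρB2]
          linarith only [h2ρ]
        calc q^(h 0) * ∫ s in Set.Ioc s₀ q⁻¹, s^(h 0) ∂F
            ≤ q^(h 0) * ((1+2/ρB) * 2^(h 0) * c₂ * s₀ ^ (((h 0:ℕ):ℝ) - β) * (q⁻¹/s₀) ^ ρB) :=
              mul_le_mul_of_nonneg_left hdyB (by positivity)
          _ = ((1+2/ρB) * 2^(h 0) * c₂) * (q ^ (((h 0:ℕ):ℝ)) *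
                (s₀ ^ (((h 0:ℕ):ℝ) - β) * (q⁻¹/s₀) ^ ρB)) := by
              rw [hnatq (h 0)]; ring
          _ = ((1+2/ρB) * 2^(h 0) * c₂) * (q ^ (((h 0:ℕ):ℝ)) * q ^ (-ρB)) := by
              rw [hcancelB]
          _ = ((1+2/ρB) * 2^(h 0) * c₂) * q ^ β := by
              rw [← Real.rpow_add hq0, show ((h 0:ℕ):ℝ) + -ρB = β by rw [hρBdef]; ring]
          _ ≤ (2*2^(h 0)*c₂) * q^β := by
              refine mul_le_mul_of_nonneg_right ?_ hXpos.le
              have hp : (0:ℝ) ≤ 2^(h 0)*c₂ := by positivity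
              calc (1+2/ρB) * 2^(h 0) * c₂ = (1+2/ρB) * (2^(h 0)*c₂) := by ring
                _ ≤ 2 * (2^(h 0)*c₂) := mul_le_mul_of_nonneg_right h12B hp
                _ = 2*2^(h 0)*c₂ := by ring
      have hB3 : ∫ s in Set.Ioi q⁻¹, jsqPoissonTail q (h 0) s ∂F ≤ c₂ * q^β := by
        have h1 : ∫ s in Set.Ioi q⁻¹, jsqPoissonTail q (h 0) s ∂F
            ≤ ∫ _ in Set.Ioi q⁻¹, (1:ℝ) ∂F := by
          refine setIntegral_mono_on (hJint (h 0)).integrableOn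
            (integrableOn_const (measure_ne_top _ _)) measurableSet_Ioi
            (fun s hs => ?_)
          have h0s : (0:ℝ) < s := lt_trans hU0 hs
          exact jsq_le_one (h 0) (by positivity)
        have h2 : ∫ _ in Set.Ioi q⁻¹, (1:ℝ) ∂F = (F (Set.Ioi q⁻¹)).toReal := by
          rw [setIntegral_const, smul_eq_mul, mul_one]; rfl
        have h3 : (F (Set.Ioi q⁻¹)).toReal ≤ c₂ * (q⁻¹) ^ (-β) := by
          refine ENNReal.toReal_le_of_le_ofReal (by positivity) (htail' q⁻¹ hUs₀)
        have h4 : (q⁻¹ : ℝ) ^ (-β) = q ^ β := by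
          rw [Real.inv_rpow hq0.le, ← Real.rpow_neg (by positivity), neg_neg]
        calc ∫ s in Set.Ioi q⁻¹, jsqPoissonTail q (h 0) s ∂F
            ≤ (F (Set.Ioi q⁻¹)).toReal := by rw [← h2]; exact h1
          _ ≤ c₂ * (q⁻¹) ^ (-β) := h3
          _ = c₂ * q ^ β := by rw [h4]
      have hIb : ∫ s, jsqPoissonTail q (h 0) s ∂F
          ≤ (q*s₀)^(h 0) + 3*2^(h 0)*c₂*q^β := by
        have h2' := hB2.trans hmidB
        have hex : c₂ * q^β ≤ 2^(h 0)*c₂*q^β := by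
          have h1 : (1:ℝ) ≤ 2^(h 0) := one_le_pow₀ one_le_two
          have := mul_le_mul_of_nonneg_right h1
            (show (0:ℝ) ≤ c₂*q^β by positivity)
          calc c₂ * q^β = 1 * (c₂*q^β) := by ring
            _ ≤ 2^(h 0) * (c₂*q^β) := this
            _ = 2^(h 0)*c₂*q^β := by ring
        rw [hJsplit1, hJsplit2]
        linarith only [hB1, h2', hB3, hex]
      have hIb0 : (0:ℝ) ≤ (q*s₀)^(h 0) + 3*2^(h 0)*c₂*q^β := by positivity
      -- assemble
      simp only [pow_one, Finset.prod_range_one]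
      have hqs1 : (q*s₀)^n = q*s₀ := by rw [hne, pow_one]
      rw [hqs1] at hLb
      have hM : 3*k * (∫ s, jsqPoissonTail q (h 0) s ∂F) *
            (∫ s, (k + s) * jsqPoissonTail q n s ∂F)
          ≤ 3*k * ((q*s₀)^(h 0) + 3*2^(h 0)*c₂*q^β) *
            (k*q + (q*s₀ + ((36*c₂) * q^(3*(β-1)/4) + 6*((D:ℝ)-1)*c₂ * q^(β-1)))) := by
        have h1 : 3*k * (∫ s, jsqPoissonTail q (h 0) s ∂F)
            ≤ 3*k * ((q*s₀)^(h 0) + 3*2^(h 0)*c₂*q^β) :=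
          mul_le_mul_of_nonneg_left hIb (by positivity)
        exact mul_le_mul h1 hLb hL0 (by positivity)
      -- the eight chunks
      have hcc3 : c₂*c₂ ≤ (c₂+1)^2 := by
        have h1 : c₂^2 ≤ (c₂+1)^2 := pow_le_pow_left₀ hc₂.le (by linarith only []) 2
        have h2 : c₂^2 = c₂*c₂ := pow_two c₂
        linarith only [h1, h2]
      have hd21 : (1:ℝ) ≤ (D:ℝ)^2 := by linarith only [hd4]
      have hxc : c₂ ≤ (D:ℝ)^2*(c₂+1)^2 :=
        hcc2.trans (le_mul_of_one_le_left (by positivity) hd21)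
      have hP1 : 3*k * (q*s₀)^(h 0) * (k*q) ≤ s₀^(2*hT) * Z := by
        calc 3*k * (q*s₀)^(h 0) * (k*q)
            = (3 * s₀^(h 0)) * (k ^ ((2:ℝ)) * q ^ (((h 0:ℕ):ℝ)+1)) := by
              rw [hk2e, Real.rpow_add hq0, Real.rpow_one, Real.rpow_natCast]; ring
          _ ≤ s₀^(2*hT) * Z := by
              refine hZstep _ _ _ _ ((hT:ℝ)-2) (by positivity) ?_
                (by linarith only [hH5]) (by linarith only [hβ2, hh0r])
                (by linarith only [hH5])
              exact mul_le_mul (by linarith only [h243]) (hs₀le (h 0) (by omega))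
                (by positivity) (by positivity)
      have hP2 : 3*k * (q*s₀)^(h 0) * (q*s₀) ≤ s₀^(2*hT) * Z := by
        calc 3*k * (q*s₀)^(h 0) * (q*s₀)
            = (3 * (s₀^(h 0)*s₀)) * (k ^ ((1:ℝ)) * q ^ (((h 0:ℕ):ℝ)+1)) := by
              rw [hk1e, Real.rpow_add hq0, Real.rpow_one, Real.rpow_natCast]; ring
          _ ≤ s₀^(2*hT) * Z := by
              refine hZstep _ _ _ _ ((hT:ℝ)-2) (by positivity) ?_
                (by linarith only [hH5]) (by linarith only [hβ2, hh0r])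
                (by linarith only [hH5])
              have e2 : s₀^(h 0)*s₀ = s₀^(h 0 + 1) := (pow_succ s₀ (h 0)).symm
              rw [e2]
              exact mul_le_mul (by linarith only [h243]) (hs₀le (h 0 + 1) (by omega))
                (by positivity) (by positivity)
      have hP3 : 3*k * (q*s₀)^(h 0) * ((36*c₂) * q^(3*(β-1)/4))
          ≤ (c₂*s₀^(2*hT)) * Z := by
        calc 3*k * (q*s₀)^(h 0) * ((36*c₂) * q^(3*(β-1)/4))
            = (108 * c₂ * s₀^(h 0)) * (k ^ ((1:ℝ)) * q ^ (((h 0:ℕ):ℝ) + 3*(β-1)/4)) := by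
              rw [hk1e, Real.rpow_add hq0, Real.rpow_natCast]; ring
          _ ≤ (c₂*s₀^(2*hT)) * Z := by
              refine hZstep _ _ _ _ (((h 0:ℕ):ℝ)-2) (by positivity) ?_
                (by linarith only [h0r]) (by linarith only [hβ2])
                (by linarith only [h0r, hH5])
              have w := mul_le_mul (show (108:ℝ) ≤ 3^hT by linarith only [h243])
                (hs₀le (h 0) (by omega)) (by positivity) (by positivity)
              calc 108 * c₂ * s₀^(h 0) = (108*s₀^(h 0))*c₂ := by ring
                _ ≤ (3^hT*s₀^(2*hT))*c₂ := mul_le_mul_of_nonneg_right w hc₂.le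
                _ = 3^hT * (c₂*s₀^(2*hT)) := by ring
      have hP4 : 3*k * (q*s₀)^(h 0) * (6*((D:ℝ)-1)*c₂ * q^(β-1))
          ≤ ((D:ℝ)*c₂*s₀^(2*hT)) * Z := by
        have hdm0 : (0:ℝ) ≤ (D:ℝ)-1 := by linarith only [hd2]
        calc 3*k * (q*s₀)^(h 0) * (6*((D:ℝ)-1)*c₂ * q^(β-1))
            = (18*((D:ℝ)-1) * (c₂ * s₀^(h 0))) * (k ^ ((1:ℝ)) * q ^ (((h 0:ℕ):ℝ) + (β-1))) := by
              rw [hk1e, Real.rpow_add hq0, Real.rpow_natCast]; ring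
          _ ≤ ((D:ℝ)*c₂*s₀^(2*hT)) * Z := by
              refine hZstep _ _ _ _ (((h 0:ℕ):ℝ)-1) (by positivity) ?_
                (by linarith only [h0r]) (by linarith only [])
                (by linarith only [h0r, hH5])
              have w0 : 18*((D:ℝ)-1) ≤ 3^hT*(D:ℝ) := by
                have w1 : 18*((D:ℝ)-1) ≤ 243*(D:ℝ) := by linarith only [hd2]
                have w2 : 243*(D:ℝ) ≤ 3^hT*(D:ℝ) :=
                  mul_le_mul_of_nonneg_right (by linarith only [h243]) (by linarith only [hd2])
                linarith only [w1, w2]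
              have w3 : c₂ * s₀^(h 0) ≤ c₂ * s₀^(2*hT) :=
                mul_le_mul_of_nonneg_left (hs₀le (h 0) (by omega)) hc₂.le
              calc 18*((D:ℝ)-1) * (c₂ * s₀^(h 0))
                  ≤ (3^hT*(D:ℝ)) * (c₂ * s₀^(2*hT)) :=
                    mul_le_mul w0 w3 (by positivity) (by positivity)
                _ = 3^hT * ((D:ℝ)*c₂*s₀^(2*hT)) := by ring
      have hP5 : 3*k * (3*2^(h 0)*c₂*q^β) * (k*q) ≤ (c₂*(hT:ℝ)^hT) * Z := by
        calc 3*k * (3*2^(h 0)*c₂*q^β) * (k*q)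
            = (9*2^(h 0)*c₂) * (k ^ ((2:ℝ)) * q ^ (β+1)) := by
              rw [hk2e, Real.rpow_add hq0, Real.rpow_one]; ring
          _ ≤ (c₂*(hT:ℝ)^hT) * Z := by
              refine hZstep _ _ _ _ 1 (by positivity) ?_
                (by linarith only []) (by linarith only []) (by linarith only [hH5])
              have w := mul_le_mul (show (9:ℝ) ≤ 3^hT by linarith only [h243])
                (h2le (h 0) (by omega)) (by positivity) (by positivity)
              calc 9*2^(h 0)*c₂ = (9*2^(h 0))*c₂ := by ring
                _ ≤ (3^hT*(hT:ℝ)^hT)*c₂ := mul_le_mul_of_nonneg_right w hc₂.le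
                _ = 3^hT * (c₂*(hT:ℝ)^hT) := by ring
      have hP6 : 3*k * (3*2^(h 0)*c₂*q^β) * (q*s₀)
          ≤ (c₂*(s₀^(2*hT)*(hT:ℝ)^hT)) * Z := by
        calc 3*k * (3*2^(h 0)*c₂*q^β) * (q*s₀)
            = (9*2^(h 0)*(c₂*s₀)) * (k ^ ((1:ℝ)) * q ^ (β+1)) := by
              rw [hk1e, Real.rpow_add hq0, Real.rpow_one]; ring
          _ ≤ (c₂*(s₀^(2*hT)*(hT:ℝ)^hT)) * Z := by
              refine hZstep _ _ _ _ 1 (by positivity) ?_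
                (by linarith only []) (by linarith only []) (by linarith only [hH5])
              have w := mul_le_mul (show (9:ℝ) ≤ 3^hT by linarith only [h243])
                (h2le (h 0) (by omega)) (by positivity) (by positivity)
              have w2 : c₂*s₀ ≤ c₂*s₀^(2*hT) :=
                mul_le_mul_of_nonneg_left hs₀self hc₂.le
              calc 9*2^(h 0)*(c₂*s₀) = (9*2^(h 0))*(c₂*s₀) := by ring
                _ ≤ (3^hT*(hT:ℝ)^hT)*(c₂*s₀^(2*hT)) :=
                    mul_le_mul w w2 (by positivity) (by positivity)
                _ = 3^hT * (c₂*(s₀^(2*hT)*(hT:ℝ)^hT)) := by ring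
      have hP7 : 3*k * (3*2^(h 0)*c₂*q^β) * ((36*c₂) * q^(3*(β-1)/4))
          ≤ (2*(c₂*c₂*(hT:ℝ)^hT)) * Z := by
        calc 3*k * (3*2^(h 0)*c₂*q^β) * ((36*c₂) * q^(3*(β-1)/4))
            = (324*2^(h 0)*(c₂*c₂)) * (k ^ ((1:ℝ)) * q ^ (β + 3*(β-1)/4)) := by
              rw [hk1e, Real.rpow_add hq0]; ring
          _ ≤ (2*(c₂*c₂*(hT:ℝ)^hT)) * Z := by
              refine hZstep _ _ _ _ 0 (by positivity) ?_
                (by linarith only []) (by linarith only [hβ1]) (by linarith only [hH5])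
              have w := mul_le_mul (show (324:ℝ) ≤ 3^hT*2 by linarith only [h243])
                (h2le (h 0) (by omega)) (by positivity) (by positivity)
              calc 324*2^(h 0)*(c₂*c₂) = (324*2^(h 0))*(c₂*c₂) := by ring
                _ ≤ ((3^hT*2)*(hT:ℝ)^hT)*(c₂*c₂) :=
                    mul_le_mul_of_nonneg_right w (by positivity)
                _ = 3^hT * (2*(c₂*c₂*(hT:ℝ)^hT)) := by ring
      have hP8 : 3*k * (3*2^(h 0)*c₂*q^β) * (6*((D:ℝ)-1)*c₂ * q^(β-1))
          ≤ ((D:ℝ)*(c₂*c₂*(hT:ℝ)^hT)) * Z := by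
        have hdm0 : (0:ℝ) ≤ (D:ℝ)-1 := by linarith only [hd2]
        calc 3*k * (3*2^(h 0)*c₂*q^β) * (6*((D:ℝ)-1)*c₂ * q^(β-1))
            = (54*((D:ℝ)-1)*2^(h 0)*(c₂*c₂)) * (k ^ ((1:ℝ)) * q ^ (β + (β-1))) := by
              rw [hk1e, Real.rpow_add hq0]; ring
          _ ≤ ((D:ℝ)*(c₂*c₂*(hT:ℝ)^hT)) * Z := by
              refine hZstep _ _ _ _ 0 (by positivity) ?_
                (by linarith only []) (by linarith only [hβ1]) (by linarith only [hH5])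
              have w0 : 54*((D:ℝ)-1) ≤ 3^hT*(D:ℝ) := by
                have w1 : 54*((D:ℝ)-1) ≤ 243*(D:ℝ) := by linarith only [hd2]
                have w2 : 243*(D:ℝ) ≤ 3^hT*(D:ℝ) :=
                  mul_le_mul_of_nonneg_right (by linarith only [h243]) (by linarith only [hd2])
                linarith only [w1, w2]
              have w := mul_le_mul w0 (h2le (h 0) (by omega)) (by positivity)
                (by positivity)
              calc 54*((D:ℝ)-1)*2^(h 0)*(c₂*c₂) = ((54*((D:ℝ)-1))*2^(h 0))*(c₂*c₂) := by ring
                _ ≤ ((3^hT*(D:ℝ))*(hT:ℝ)^hT)*(c₂*c₂) :=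
                    mul_le_mul_of_nonneg_right w (by positivity)
                _ = 3^hT * ((D:ℝ)*(c₂*c₂*(hT:ℝ)^hT)) := by ring
      -- coefficient sums
      have g1 : s₀^(2*hT) ≤ E := hEv2
      have g3 : c₂*s₀^(2*hT) ≤ E :=
        hEgen c₂ (s₀^(2*hT)) hc₂.le hxc (by positivity)
          (le_mul_of_one_le_right (by positivity) hTpow0)
      have g4 : (D:ℝ)*c₂*s₀^(2*hT) ≤ E :=
        hEgen ((D:ℝ)*c₂) (s₀^(2*hT)) (by positivity)
          (mul_le_mul hdd hcc2 hc₂.le (by positivity)) (by positivity)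
          (le_mul_of_one_le_right (by positivity) hTpow0)
      have g5 : c₂*(hT:ℝ)^hT ≤ E :=
        hEgen c₂ ((hT:ℝ)^hT) hc₂.le hxc (by positivity)
          (le_mul_of_one_le_left (by positivity) hSpow1)
      have g6 : c₂*(s₀^(2*hT)*(hT:ℝ)^hT) ≤ E :=
        hEgen c₂ (s₀^(2*hT)*(hT:ℝ)^hT) hc₂.le hxc (by positivity) le_rfl
      have g7 : 2*(c₂*c₂*(hT:ℝ)^hT) ≤ E := by
        have := hEgen (2*(c₂*c₂)) ((hT:ℝ)^hT) (by positivity)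
          (mul_le_mul (by linarith only [hd4]) hcc3 (by positivity) (by positivity))
          (by positivity) (le_mul_of_one_le_left (by positivity) hSpow1)
        linarith only [this]
      have g8 : (D:ℝ)*(c₂*c₂*(hT:ℝ)^hT) ≤ E := by
        have := hEgen ((D:ℝ)*(c₂*c₂)) ((hT:ℝ)^hT) (by positivity)
          (mul_le_mul hdd hcc3 (by positivity) (by positivity))
          (by positivity) (le_mul_of_one_le_left (by positivity) hSpow1)
        linarith only [this]
      calc 3*k * (∫ s, jsqPoissonTail q (h 0) s ∂F) *
            (∫ s, (k + s) * jsqPoissonTail q n s ∂F)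
          ≤ 3*k * ((q*s₀)^(h 0) + 3*2^(h 0)*c₂*q^β) *
            (k*q + (q*s₀ + ((36*c₂) * q^(3*(β-1)/4) + 6*((D:ℝ)-1)*c₂ * q^(β-1)))) := hM
        _ = 3*k * (q*s₀)^(h 0) * (k*q) + 3*k * (q*s₀)^(h 0) * (q*s₀)
            + 3*k * (q*s₀)^(h 0) * ((36*c₂) * q^(3*(β-1)/4))
            + 3*k * (q*s₀)^(h 0) * (6*((D:ℝ)-1)*c₂ * q^(β-1))
            + 3*k * (3*2^(h 0)*c₂*q^β) * (k*q)
            + 3*k * (3*2^(h 0)*c₂*q^β) * (q*s₀)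
            + 3*k * (3*2^(h 0)*c₂*q^β) * ((36*c₂) * q^(3*(β-1)/4))
            + 3*k * (3*2^(h 0)*c₂*q^β) * (6*((D:ℝ)-1)*c₂ * q^(β-1)) := by ring
        _ ≤ (s₀^(2*hT) + s₀^(2*hT) + c₂*s₀^(2*hT) + (D:ℝ)*c₂*s₀^(2*hT)
              + c₂*(hT:ℝ)^hT + c₂*(s₀^(2*hT)*(hT:ℝ)^hT) + 2*(c₂*c₂*(hT:ℝ)^hT)
              + (D:ℝ)*(c₂*c₂*(hT:ℝ)^hT)) * Z := by
            linarith only [hP1, hP2, hP3, hP4, hP5, hP6, hP7, hP8]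
        _ ≤ (81*E) * Z := by
            refine mul_le_mul_of_nonneg_right ?_ hZ0
            linarith only [g1, g3, g4, g5, g6, g7, g8, hE0]
        _ = 81 * (D:ℝ)^2 * (c₂+1)^2 * s₀^(2*hT) * (hT:ℝ)^hT * (3*k)^hT * q^β := hRHSeq.symm
    · -- SUBCASE m ≥ 3
      have hm'2r : (2:ℝ) ≤ (m':ℝ) := by exact_mod_cast hm'ge
      have hT3a : (3*k)^m' * q^m' * ((36*c₂) * q^(3*(β-1)/4)) ≤ (36*c₂) * Z := by
        calc (3*k)^m' * q^m' * ((36*c₂) * q^(3*(β-1)/4))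
            = (3^m' * (36*c₂)) * (k ^ ((m':ℝ)) * q ^ ((m':ℝ) + 3*(β-1)/4)) := by
              rw [mul_pow 3 k, hnatk m', hnatq m', Real.rpow_add hq0]; ring
          _ ≤ (36*c₂) * Z := by
              refine hZstep _ _ _ _ ((m':ℝ)-2) (by positivity) ?_
                (by linarith only [hm'2r]) (by linarith only [hβ2])
                (by linarith only [hm'2r, hH5])
              exact mul_le_mul_of_nonneg_right (h3hT m' (by omega)) (by positivity)
      have hT4 : (3*k)^m' * q^m' * (6*((D:ℝ)-1)*c₂ * q^(β-1)) ≤ (6*((D:ℝ)*c₂)) * Z := by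
        have hdm0 : (0:ℝ) ≤ (D:ℝ)-1 := by linarith only [hd2]
        calc (3*k)^m' * q^m' * (6*((D:ℝ)-1)*c₂ * q^(β-1))
            = (3^m' * (6*((D:ℝ)-1)*c₂)) * (k ^ ((m':ℝ)) * q ^ ((m':ℝ) + (β-1))) := by
              rw [mul_pow 3 k, hnatk m', hnatq m', Real.rpow_add hq0]; ring
          _ ≤ (6*((D:ℝ)*c₂)) * Z := by
              refine hZstep _ _ _ _ ((m':ℝ)-1) (by positivity) ?_
                (by linarith only [hm'r]) (by linarith only [])
                (by linarith only [hm'r, hH5])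
              have w1 : 6*((D:ℝ)-1)*c₂ ≤ 6*((D:ℝ)*c₂) := by
                have := mul_le_mul_of_nonneg_right
                  (show (D:ℝ)-1 ≤ (D:ℝ) by linarith only []) hc₂.le
                linarith only [this]
              exact mul_le_mul (h3hT m' (by omega)) w1 (by positivity) (by positivity)
      have hM : (3*k)^m' * (∏ ℓ ∈ Finset.range m', ∫ s, jsqPoissonTail q (h ℓ) s ∂F) *
            (∫ s, (k + s) * jsqPoissonTail q n s ∂F)
          ≤ (3*k)^m' * q^m' *
            (k*q + ((q*s₀)^n + ((36*c₂) * q^(3*(β-1)/4) + 6*((D:ℝ)-1)*c₂ * q^(β-1)))) := by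
        have h1 : (3*k)^m' * (∏ ℓ ∈ Finset.range m', ∫ s, jsqPoissonTail q (h ℓ) s ∂F)
            ≤ (3*k)^m' * q^m' := mul_le_mul_of_nonneg_left hPq (by positivity)
        exact mul_le_mul h1 hLb hL0 (by positivity)
      have hEc : c₂ ≤ E := by
        have := hEgen c₂ 1 hc₂.le (hcc2.trans (le_mul_of_one_le_left (by positivity)
          (by linarith only [hd4]))) (by norm_num) hSSTT
        linarith only [this]
      have hEdc2 : (D:ℝ)*c₂ ≤ E := by
        have := hEgen ((D:ℝ)*c₂) 1 (by positivity)
          (mul_le_mul hdd hcc2 hc₂.le (by positivity)) (by norm_num) hSSTT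
        linarith only [this]
      calc (3*k)^m' * (∏ ℓ ∈ Finset.range m', ∫ s, jsqPoissonTail q (h ℓ) s ∂F) *
            (∫ s, (k + s) * jsqPoissonTail q n s ∂F)
          ≤ (3*k)^m' * q^m' *
            (k*q + ((q*s₀)^n + ((36*c₂) * q^(3*(β-1)/4) + 6*((D:ℝ)-1)*c₂ * q^(β-1)))) := hM
        _ = (3*k)^m' * q^m' * (k*q) + ((3*k)^m' * q^m' * (q*s₀)^n
              + ((3*k)^m' * q^m' * ((36*c₂) * q^(3*(β-1)/4))
                + (3*k)^m' * q^m' * (6*((D:ℝ)-1)*c₂ * q^(β-1)))) := by ring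
        _ ≤ 1*Z + (s₀^(2*hT)*Z + ((36*c₂)*Z + (6*((D:ℝ)*c₂))*Z)) :=
            add_le_add hT1 (add_le_add hT2 (add_le_add hT3a hT4))
        _ = (1 + s₀^(2*hT) + 36*c₂ + 6*((D:ℝ)*c₂)) * Z := by ring
        _ ≤ (81*E) * Z := by
            refine mul_le_mul_of_nonneg_right ?_ hZ0
            linarith only [hE1, hEv2, hEc, hEdc2, hE0]
        _ = 81 * (D:ℝ)^2 * (c₂+1)^2 * s₀^(2*hT) * (hT:ℝ)^hT * (3*k)^hT * q^β := hRHSeq.symm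


  · -- CASE n ≥ 2
    have hn2r : (2:ℝ) ≤ (n:ℝ) := by exact_mod_cast hncase
    obtain ⟨ρ, hρdef⟩ : ∃ ρ:ℝ, ρ = (n:ℝ)+1-β := ⟨_, rfl⟩
    have hρ1 : (1:ℝ) ≤ ρ := by rw [hρdef]; linarith only [hβ2, hn2r]
    have hρ0 : (0:ℝ) < ρ := by linarith only [hρ1]
    have hdy := dyadic_up D hD c₂ s₀ hc₂ hs₀ F htail (n+1) (by omega) q⁻¹ hUs₀ ρ hρ0
      (by rw [← hβ, hρdef]; push_cast; linarith only [])
    rw [← hβ] at hdy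
    have hcancel : s₀ ^ (((n+1:ℕ):ℝ) - β) * (q⁻¹/s₀) ^ ρ = q ^ (-ρ) := by
      have e1 : q⁻¹/s₀ = (q*s₀)⁻¹ := by field_simp
      rw [e1, Real.inv_rpow (by positivity), ← Real.rpow_neg (by positivity),
        Real.mul_rpow hq0.le hs₀0.le]
      calc s₀ ^ (((n+1:ℕ):ℝ) - β) * (q ^ (-ρ) * s₀ ^ (-ρ))
          = q ^ (-ρ) * s₀ ^ ((((n+1:ℕ):ℝ) - β) + -ρ) := by
            rw [Real.rpow_add hs₀0]; ring
        _ = q ^ (-ρ) := by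
            rw [show (((n+1:ℕ):ℝ) - β) + -ρ = 0 by push_cast; rw [hρdef]; ring,
              Real.rpow_zero, mul_one]
    have hmid : q^n * ∫ s in Set.Ioc s₀ q⁻¹, s^(n+1) ∂F ≤ (6*2^n*c₂) * q^(β-1) := by
      have h12 : (1+2/ρ) ≤ 3 := by
        have h2ρ : 2/ρ ≤ 2 := by
          rw [div_le_iff₀ hρ0]; linarith only [hρ1]
        linarith only [h2ρ]
      calc q^n * ∫ s in Set.Ioc s₀ q⁻¹, s^(n+1) ∂F
          ≤ q^n * ((1+2/ρ) * 2^(n+1) * c₂ * s₀ ^ (((n+1:ℕ):ℝ) - β) * (q⁻¹/s₀) ^ ρ) :=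
            mul_le_mul_of_nonneg_left hdy (by positivity)
        _ = ((1+2/ρ) * 2^(n+1) * c₂) * (q ^ ((n:ℝ)) * (s₀ ^ (((n+1:ℕ):ℝ) - β) * (q⁻¹/s₀) ^ ρ)) := by
            rw [hnatq n]; ring
        _ = ((1+2/ρ) * 2^(n+1) * c₂) * (q ^ ((n:ℝ)) * q ^ (-ρ)) := by rw [hcancel]
        _ = ((1+2/ρ) * 2^(n+1) * c₂) * q ^ (β-1) := by
            rw [← Real.rpow_add hq0, show (n:ℝ) + -ρ = β-1 by rw [hρdef]; ring]
        _ ≤ (6*2^n*c₂) * q^(β-1) := by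
            have hb0 : (0:ℝ) ≤ q^(β-1) := (Real.rpow_pos_of_pos hq0 _).le
            have hco : (1+2/ρ) * 2^(n+1) * c₂ ≤ 6*2^n*c₂ := by
              have h1 := mul_le_mul_of_nonneg_right h12
                (show (0:ℝ) ≤ 2^(n+1)*c₂ by positivity)
              calc (1+2/ρ) * 2^(n+1) * c₂ = (1+2/ρ) * (2^(n+1)*c₂) := by ring
                _ ≤ 3 * (2^(n+1)*c₂) := h1
                _ = 6*2^n*c₂ := by rw [pow_succ]; ring
            exact mul_le_mul_of_nonneg_right hco hb0
    have hsJ : ∫ s, s * jsqPoissonTail q n s ∂F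
        ≤ (q*s₀)^n + (6*2^n*c₂) * q^(β-1) + 6*((D:ℝ)-1)*c₂ * q^(β-1) := by
      have h3' := hA3
      rw [hUpow] at h3'
      have h2' := hA2.trans hmid
      rw [hsplit1, hsplit2]
      linarith only [hA1, h2', h3']
    have hLb : ∫ s, (k + s) * jsqPoissonTail q n s ∂F
        ≤ k*q + ((q*s₀)^n + ((6*2^n + 6*((D:ℝ)-1))*c₂) * q^(β-1)) := by
      rw [hLsplit]
      have h1 : k * (∫ s, jsqPoissonTail q n s ∂F) ≤ k * q :=
        mul_le_mul_of_nonneg_left (hblock n hn1) hk0.le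
      have e : ((6*2^n + 6*((D:ℝ)-1))*c₂) * q^(β-1)
          = (6*2^n*c₂) * q^(β-1) + 6*((D:ℝ)-1)*c₂ * q^(β-1) := by ring
      linarith only [hsJ, h1, e]
    have hW0 : (0:ℝ) ≤ (6*2^n + 6*((D:ℝ)-1))*c₂ := by
      have : (0:ℝ) ≤ 6*2^n + 6*((D:ℝ)-1) := by
        linarith only [pow_nonneg (by norm_num : (0:ℝ) ≤ 2) n, hd2]
      exact mul_nonneg this hc₂.le
    have hWb : (6*2^n + 6*((D:ℝ)-1))*c₂ ≤ 7*(D:ℝ)*c₂*(hT:ℝ)^hT := by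
      have c1 : (6:ℝ)*2^n ≤ (hT:ℝ)^hT := by
        have d1 : (6:ℝ)*2^n ≤ 2^(n+3) := by
          rw [pow_add]
          have := pow_nonneg (by norm_num : (0:ℝ) ≤ 2) n
          norm_num
          linarith only [this]
        have d2 : (2:ℝ)^(n+3) ≤ (hT:ℝ)^hT := h2le (n+3) (by omega)
        linarith
      have c2 : 6*((D:ℝ)-1) ≤ 6*(D:ℝ)*(hT:ℝ)^hT := by
        have w := mul_nonneg (show (0:ℝ) ≤ (D:ℝ) by linarith only [hd2])
          (show (0:ℝ) ≤ (hT:ℝ)^hT - 1 by linarith only [hTpow0])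
        linarith only [w, hd2]
      have c3 : 6*2^n + 6*((D:ℝ)-1) ≤ 7*(D:ℝ)*(hT:ℝ)^hT := by
        have w := mul_nonneg (show (0:ℝ) ≤ (hT:ℝ)^hT by linarith only [hTpow0])
          (show (0:ℝ) ≤ (D:ℝ)-1 by linarith only [hd2])
        linarith only [w, c1, c2]
      calc (6*2^n + 6*((D:ℝ)-1))*c₂ ≤ (7*(D:ℝ)*(hT:ℝ)^hT)*c₂ :=
            mul_le_mul_of_nonneg_right c3 hc₂.le
        _ = 7*(D:ℝ)*c₂*(hT:ℝ)^hT := by ring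
    have hT3 : (3*k)^m' * q^m' * (((6*2^n + 6*((D:ℝ)-1))*c₂) * q^(β-1))
        ≤ (7*((D:ℝ)*c₂*(hT:ℝ)^hT)) * Z := by
      have e1 : (3*k)^m' * q^m' * (((6*2^n + 6*((D:ℝ)-1))*c₂) * q^(β-1))
          = (3^m' * ((6*2^n + 6*((D:ℝ)-1))*c₂)) * (k ^ ((m':ℝ)) * q ^ ((m':ℝ)+(β-1))) := by
        rw [mul_pow 3 k, hnatk m', hnatq m', Real.rpow_add hq0]; ring
      rw [e1, hZ]
      have h2 := hCB ((m':ℝ)) ((m':ℝ)+(β-1)) ((m':ℝ)-1) (by linarith only [hm'r])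
        (by linarith only []) (by linarith only [hm'r, hH5])
      have hco : 3^m' * ((6*2^n + 6*((D:ℝ)-1))*c₂) ≤ 3^hT * (7*(D:ℝ)*c₂*(hT:ℝ)^hT) :=
        mul_le_mul (h3hT m' (by omega)) hWb hW0 (by positivity)
      calc (3^m' * ((6*2^n + 6*((D:ℝ)-1))*c₂)) * (k ^ ((m':ℝ)) * q ^ ((m':ℝ)+(β-1)))
          ≤ (3^m' * ((6*2^n + 6*((D:ℝ)-1))*c₂)) * (k ^ ((hT:ℝ)) * q ^ β) := by
            refine mul_le_mul_of_nonneg_left h2 ?_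
            positivity
        _ ≤ (3^hT * (7*(D:ℝ)*c₂*(hT:ℝ)^hT)) * (k ^ ((hT:ℝ)) * q ^ β) :=
            mul_le_mul_of_nonneg_right hco (by positivity)
        _ = (7*((D:ℝ)*c₂*(hT:ℝ)^hT)) * (3^hT * (k ^ ((hT:ℝ)) * q ^ β)) := by ring
    have hM : (3*k)^m' * (∏ ℓ ∈ Finset.range m', ∫ s, jsqPoissonTail q (h ℓ) s ∂F) *
          (∫ s, (k + s) * jsqPoissonTail q n s ∂F)
        ≤ (3*k)^m' * q^m' * (k*q + ((q*s₀)^n + ((6*2^n + 6*((D:ℝ)-1))*c₂) * q^(β-1))) := by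
      have h1 : (3*k)^m' * (∏ ℓ ∈ Finset.range m', ∫ s, jsqPoissonTail q (h ℓ) s ∂F)
          ≤ (3*k)^m' * q^m' := mul_le_mul_of_nonneg_left hPq (by positivity)
      exact mul_le_mul h1 hLb hL0 (by positivity)
    have hsum : 1 + s₀^(2*hT) + 7*((D:ℝ)*c₂*(hT:ℝ)^hT) ≤ 81 * E := by
      linarith only [hE1, hEv2, hEdc, hE0]
    calc (3*k)^m' * (∏ ℓ ∈ Finset.range m', ∫ s, jsqPoissonTail q (h ℓ) s ∂F) *
          (∫ s, (k + s) * jsqPoissonTail q n s ∂F)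
        ≤ (3*k)^m' * q^m' * (k*q + ((q*s₀)^n + ((6*2^n + 6*((D:ℝ)-1))*c₂) * q^(β-1))) := hM
      _ = (3*k)^m' * q^m' * (k*q) + ((3*k)^m' * q^m' * (q*s₀)^n
            + (3*k)^m' * q^m' * (((6*2^n + 6*((D:ℝ)-1))*c₂) * q^(β-1))) := by ring
      _ ≤ 1*Z + (s₀^(2*hT)*Z + (7*((D:ℝ)*c₂*(hT:ℝ)^hT))*Z) :=
          add_le_add hT1 (add_le_add hT2 hT3)
      _ = (1 + s₀^(2*hT) + 7*((D:ℝ)*c₂*(hT:ℝ)^hT)) * Z := by ring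
      _ ≤ (81*E) * Z := mul_le_mul_of_nonneg_right hsum hZ0
      _ = 81 * (D:ℝ)^2 * (c₂+1)^2 * s₀^(2*hT) * (hT:ℝ)^hT * (3*k)^hT * q^β := hRHSeq.symm
end

section
/- Let β > 1 and s₀ ≥ 1 be reals, let F be a Borel probability measure on [0,∞) with mean ∫ s dF(s) = 1 and tail F((s,∞)) ≤ s^{-β} for all s ≥ s₀, and let L : [0,∞) → [0,1] be a nondecreasing function. Then for every real k ≥ 1, ∫_0^{∞} (k+s) L(s) dF(s) ≤ 2β (s₀^{β+1} + 1) · k · ∫_1^{∞} s^{-β} L(s) ds. -/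
open Filter Topology MeasureTheory

section DecayAux
open Set


lemma aux_tail_meas (β s₀ c : ℝ) (hβ : 1 < β) (hs₀ : 0 < s₀) (hc : s₀ ≤ c) :
    ((volume.restrict (Set.Ioi s₀)).withDensity
      (fun t => ENNReal.ofReal (β * t ^ (-β-1)))) (Set.Ioi c) = ENNReal.ofReal (c ^ (-β)) := by
  have hc0 : 0 < c := lt_of_lt_of_le hs₀ hc
  rw [withDensity_apply _ measurableSet_Ioi, Measure.restrict_restrict measurableSet_Ioi]
  have h1 : Set.Ioi c ∩ Set.Ioi s₀ = Set.Ioi c := by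
    rw [Set.Ioi_inter_Ioi]; simp [max_eq_left hc]
  rw [h1]
  have hint : IntegrableOn (fun t : ℝ => β * t ^ (-β-1)) (Set.Ioi c) :=
    (integrableOn_Ioi_rpow_of_lt (by linarith) hc0).const_mul β
  have hnn : 0 ≤ᵐ[volume.restrict (Set.Ioi c)] (fun t : ℝ => β * t ^ (-β-1)) := by
    filter_upwards [ae_restrict_mem measurableSet_Ioi] with t ht
    exact mul_nonneg (by linarith) (Real.rpow_nonneg (by linarith [(show c < t from ht).le] : (0:ℝ) ≤ t) _)
  rw [← ofReal_integral_eq_lintegral_ofReal hint hnn]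
  congr 1
  rw [MeasureTheory.integral_const_mul, integral_Ioi_rpow_of_lt (by linarith) hc0]
  have h2 : -β - 1 + 1 = -β := by ring
  rw [h2]
  field_simp

lemma aux_superlevel (β s₀ : ℝ) (hβ : 1 < β) (hs₀ : 1 ≤ s₀) (F : Measure ℝ)
    (htail : ∀ s : ℝ, s₀ ≤ s → F (Set.Ioi s) ≤ ENNReal.ofReal (s ^ (-β)))
    (g : ℝ → ℝ) (hgmono : MonotoneOn g (Set.Ici 0)) (hgm : Measurable g) (lam : ℝ) :
    F.restrict (Set.Ioi s₀) {s | lam < g s} ≤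
      ((volume.restrict (Set.Ioi s₀)).withDensity
        (fun t => ENNReal.ofReal (β * t ^ (-β-1)))) {s | lam < g s} := by
  have hs₀0 : (0:ℝ) < s₀ := lt_of_lt_of_le one_pos hs₀
  set μ' := ((volume.restrict (Set.Ioi s₀)).withDensity
        (fun t => ENNReal.ofReal (β * t ^ (-β-1)))) with hμ'
  rw [Measure.restrict_apply (measurableSet_lt measurable_const hgm)]
  set U := {s | lam < g s} ∩ Set.Ioi s₀ with hU
  by_cases hUne : U.Nonempty
  · have hbdd : BddBelow U := ⟨s₀, fun x hx => (hx.2 : s₀ < x).le⟩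
    set c := sInf U with hc
    have hcge : s₀ ≤ c := le_csInf hUne fun x hx => (hx.2 : s₀ < x).le
    have hup : ∀ x ∈ U, ∀ y, x ≤ y → y ∈ U := by
      intro x hx y hxy
      have hx0 : (0:ℝ) ≤ x := le_of_lt (lt_of_lt_of_le hs₀0 (le_of_lt hx.2))
      refine ⟨show lam < g y from lt_of_lt_of_le hx.1 (hgmono hx0 (hx0.trans hxy) hxy),
        show s₀ < y from lt_of_lt_of_le hx.2 hxy⟩
    have hIoiU : Set.Ioi c ⊆ U := by
      intro y hy
      obtain ⟨x, hxU, hxy⟩ := (csInf_lt_iff hbdd hUne).mp hy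
      exact hup x hxU y hxy.le
    have hUIci : U ⊆ Set.Ici c ∩ Set.Ioi s₀ := fun x hx => ⟨csInf_le hbdd hx, hx.2⟩
    have hF : F U ≤ ENNReal.ofReal (c ^ (-β)) := by
      refine le_trans (measure_mono hUIci) ?_
      rcases eq_or_lt_of_le hcge with h | h
      · have : Set.Ici c ∩ Set.Ioi s₀ = Set.Ioi s₀ := by
          rw [← h]; exact Set.inter_eq_self_of_subset_right Set.Ioi_subset_Ici_self
        rw [this, ← h]; exact htail s₀ le_rfl
      · have hlim : Tendsto (fun t : ℝ => ENNReal.ofReal (t ^ (-β))) (𝓝[<] c)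
            (𝓝 (ENNReal.ofReal (c ^ (-β)))) := by
          have hcont : ContinuousAt (fun t : ℝ => t ^ (-β)) c :=
            Real.continuousAt_rpow_const c (-β) (Or.inl (ne_of_gt (lt_of_lt_of_le hs₀0 hcge)))
          exact (ENNReal.continuous_ofReal.continuousAt.comp hcont).tendsto.mono_left
            nhdsWithin_le_nhds
        refine ge_of_tendsto hlim ?_
        filter_upwards [Ioo_mem_nhdsLT_of_mem (⟨h, le_rfl⟩ : c ∈ Set.Ioc s₀ c)] with t ht
        refine le_trans (measure_mono ?_) (htail t ht.1.le)
        intro x hx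
        exact lt_of_lt_of_le ht.2 hx.1
    refine le_trans hF ?_
    rw [← aux_tail_meas β s₀ c hβ hs₀0 hcge]
    exact measure_mono fun x hx => (hIoiU hx).1
  · rw [Set.not_nonempty_iff_eq_empty] at hUne
    rw [hUne]
    simp

end DecayAux

set_option maxHeartbeats 1000000 in
/-- Reduction of the expected-occupation-time estimate to a deterministic integral:
if `F` is a probability measure on `[0,∞)` with mean `1` and tail
`F((s,∞)) ≤ s^{-β}` for `s ≥ s₀`, and `L : [0,∞) → [0,1]` is nondecreasing, then
for every `k ≥ 1`,
`∫₀^∞ (k+s) L(s) dF(s) ≤ 2β (s₀^{β+1} + 1) k ∫₁^∞ s^{-β} L(s) ds`. -/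
theorem decay_of_tails_jsq_stmt19
    (β s₀ : ℝ) (hβ : 1 < β) (hs₀ : 1 ≤ s₀)
    (F : Measure ℝ) [IsProbabilityMeasure F]
    (hsupp : F (Set.Ici (0:ℝ))ᶜ = 0) (hmean : ∫ s, s ∂F = 1)
    (htail : ∀ s : ℝ, s₀ ≤ s → F (Set.Ioi s) ≤ ENNReal.ofReal (s ^ (-β)))
    (L : ℝ → ℝ) (hLmono : MonotoneOn L (Set.Ici (0:ℝ)))
    (hLrange : ∀ s : ℝ, 0 ≤ s → L s ∈ Set.Icc (0:ℝ) 1) :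
    ∀ k : ℝ, 1 ≤ k →
      ∫ s, (k + s) * L s ∂F ≤
        2 * β * (s₀ ^ (β + 1) + 1) * k * ∫ s in Set.Ioi (1:ℝ), s ^ (-β) * L s := by
  intro k hk
  have hk0 : (0:ℝ) < k := lt_of_lt_of_le one_pos hk
  have hs₀0 : (0:ℝ) < s₀ := lt_of_lt_of_le one_pos hs₀
  have hβ0 : (0:ℝ) < β := lt_trans one_pos hβ
  set L' : ℝ → ℝ := fun s => L (max s 0) with hL'def
  have hL'mono : Monotone L' := fun a b hab =>
    hLmono (le_max_right a 0) (le_max_right b 0) (max_le_max hab le_rfl)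
  have hL'meas : Measurable L' := hL'mono.measurable
  have hL'range : ∀ s, 0 ≤ L' s ∧ L' s ≤ 1 := fun s =>
    ⟨(hLrange _ (le_max_right s 0)).1, (hLrange _ (le_max_right s 0)).2⟩
  have hL'eq : ∀ s : ℝ, 0 ≤ s → L' s = L s := fun s hs => by
    simp only [hL'def, max_eq_left hs]
  set g : ℝ → ℝ := fun s => (k + s) * L' s with hgdef
  have hgm : Measurable g := (measurable_const.add measurable_id).mul hL'meas
  have hgmono : MonotoneOn g (Set.Ici 0) := by
    intro a ha b hb hab
    have hb0 : (0:ℝ) ≤ b := hb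
    exact mul_le_mul (by linarith) (hL'mono hab) (hL'range a).1 (by linarith)
  have hgnn : ∀ s : ℝ, 0 ≤ s → 0 ≤ g s := fun s hs =>
    mul_nonneg (by linarith) (hL'range s).1
  have haeIci : ∀ᵐ s ∂F, s ∈ Set.Ici (0:ℝ) := by
    rw [ae_iff]
    exact hsupp
  -- integrability of g wrt F
  have hid : Integrable (fun s : ℝ => s) F := by
    by_contra h
    rw [integral_undef h] at hmean
    norm_num at hmean
  have hdom : Integrable (fun s : ℝ => k + |s|) F := (integrable_const k).add hid.abs
  have hgint : Integrable g F := by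
    refine hdom.mono' hgm.aestronglyMeasurable ?_
    filter_upwards with s
    have h2 : |L' s| ≤ 1 := abs_le.mpr ⟨by linarith [(hL'range s).1], (hL'range s).2⟩
    calc ‖g s‖ = |k + s| * |L' s| := abs_mul _ _
      _ ≤ (k + |s|) * 1 := by
          refine mul_le_mul ?_ h2 (abs_nonneg _) (by positivity)
          calc |k + s| ≤ |k| + |s| := abs_add_le _ _
            _ = k + |s| := by rw [abs_of_pos hk0]
      _ = k + |s| := mul_one _
  have h0 : ∫ s, (k + s) * L s ∂F = ∫ s, g s ∂F := by
    refine integral_congr_ae ?_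
    filter_upwards [haeIci] with s hs
    simp only [hgdef]
    rw [hL'eq s hs]
  -- the deterministic integral
  set I : ℝ := ∫ t in Set.Ioi (1:ℝ), t ^ (-β) * L' t with hIdef
  have hWm : Measurable fun t : ℝ => t ^ (-β) * L' t :=
    (measurable_id.pow_const _).mul hL'meas
  have hrpow1 : IntegrableOn (fun t : ℝ => t ^ (-β)) (Set.Ioi (1:ℝ)) :=
    integrableOn_Ioi_rpow_of_lt (by linarith) one_pos
  have hIint : IntegrableOn (fun t : ℝ => t ^ (-β) * L' t) (Set.Ioi 1) := by
    refine hrpow1.mono' hWm.aestronglyMeasurable ?_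
    filter_upwards [ae_restrict_mem measurableSet_Ioi] with t ht
    have ht0 : (0:ℝ) < t := lt_trans one_pos ht
    have hr : (0:ℝ) ≤ t ^ (-β) := Real.rpow_nonneg ht0.le _
    rw [Real.norm_eq_abs, abs_mul, abs_of_nonneg hr]
    have h2 : |L' t| ≤ 1 := abs_le.mpr ⟨by linarith [(hL'range t).1], (hL'range t).2⟩
    nlinarith [abs_nonneg (L' t)]
  have hInn : (0:ℝ) ≤ I := setIntegral_nonneg measurableSet_Ioi fun t ht =>
    mul_nonneg (Real.rpow_nonneg (le_of_lt (lt_trans one_pos ht)) _) (hL'range t).1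
  have htailint : IntegrableOn (fun t : ℝ => t ^ (-β) * L' t) (Set.Ioi s₀) :=
    hIint.mono_set (Set.Ioi_subset_Ioi hs₀)
  have hsubI : ∫ t in Set.Ioi s₀, t ^ (-β) * L' t ≤ I := by
    refine setIntegral_mono_set hIint ?_
      (HasSubset.Subset.eventuallyLE (Set.Ioi_subset_Ioi hs₀))
    filter_upwards [ae_restrict_mem measurableSet_Ioi] with t ht
    exact mul_nonneg (Real.rpow_nonneg (le_of_lt (lt_trans one_pos ht)) _) (hL'range t).1
  have hTnn : (0:ℝ) ≤ ∫ t in Set.Ioi s₀, t ^ (-β) * L' t :=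
    setIntegral_nonneg measurableSet_Ioi fun t ht =>
      mul_nonneg (Real.rpow_nonneg (le_of_lt (lt_trans hs₀0 ht)) _) (hL'range t).1
  -- bound on L' s₀
  have hLs₀ : L' s₀ * (s₀ ^ (1-β) / (β-1)) ≤ I := by
    have h1 : ∫ t in Set.Ioi s₀, t ^ (-β) * L' s₀ ≤ ∫ t in Set.Ioi s₀, t ^ (-β) * L' t := by
      refine setIntegral_mono_on
        ((integrableOn_Ioi_rpow_of_lt (by linarith) hs₀0).mul_const _)
        htailint measurableSet_Ioi ?_
      intro t ht
      exact mul_le_mul_of_nonneg_left (hL'mono (le_of_lt ht))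
        (Real.rpow_nonneg (le_of_lt (lt_trans hs₀0 ht)) _)
    have h2 : ∫ t in Set.Ioi s₀, t ^ (-β) * L' s₀ = L' s₀ * (s₀ ^ (1-β) / (β-1)) := by
      rw [integral_mul_const, integral_Ioi_rpow_of_lt (by linarith) hs₀0]
      have e : -β + 1 = 1 - β := by ring
      rw [e, show (1 - β : ℝ) = -(β - 1) by ring, neg_div_neg_eq]
      ring
    linarith [h1.trans hsubI]
  -- split the integral
  have hsplit : ∫ s, g s ∂F =
      (∫ s in Set.Iic s₀, g s ∂F) + ∫ s in Set.Ioi s₀, g s ∂F := by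
    rw [← integral_add_compl measurableSet_Iic hgint, Set.compl_Iic]
  -- part 1
  have hpart1 : ∫ s in Set.Iic s₀, g s ∂F ≤ (k + s₀) * L' s₀ := by
    have hC : (0:ℝ) ≤ (k + s₀) * L' s₀ := mul_nonneg (by linarith) (hL'range s₀).1
    have hb : ∫ s in Set.Iic s₀, g s ∂F ≤ ∫ _ in Set.Iic s₀, (k + s₀) * L' s₀ ∂F := by
      refine integral_mono_ae hgint.restrict (integrable_const _) ?_
      filter_upwards [ae_restrict_mem measurableSet_Iic, ae_restrict_of_ae haeIci]
        with s hs1 hs2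
      have hss : s ≤ s₀ := hs1
      have hs0 : (0:ℝ) ≤ s := hs2
      exact mul_le_mul (by linarith) (hL'mono hss) (hL'range s).1 (by linarith)
    refine hb.trans ?_
    rw [setIntegral_const, smul_eq_mul, measureReal_def]
    have h1 : (F (Set.Iic s₀)).toReal ≤ 1 := by
      have := ENNReal.toReal_mono (by simp) (prob_le_one (μ := F) (s := Set.Iic s₀))
      simpa using this
    nlinarith
  -- part 2 : measure comparison
  set w : ℝ → ENNReal := fun t => ENNReal.ofReal (β * t ^ (-β-1)) with hwdef
  have hwmeas : Measurable w :=
    ENNReal.measurable_ofReal.comp (measurable_const.mul (measurable_id.pow_const _))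
  set μ' := (volume.restrict (Set.Ioi s₀)).withDensity w with hμ'def
  have hgnnF : 0 ≤ᵐ[F.restrict (Set.Ioi s₀)] g := by
    filter_upwards [ae_restrict_mem measurableSet_Ioi] with s hs
    exact hgnn s (le_of_lt (lt_trans hs₀0 hs))
  have hμ'null : μ' (Set.Ioi s₀)ᶜ = 0 := by
    rw [hμ'def, withDensity_apply _ measurableSet_Ioi.compl,
      Measure.restrict_restrict measurableSet_Ioi.compl, Set.compl_inter_self,
      Measure.restrict_empty, lintegral_zero_measure]
  have hgnnμ' : 0 ≤ᵐ[μ'] g := by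
    rw [Filter.EventuallyLE, ae_iff]
    refine measure_mono_null ?_ hμ'null
    intro s hs
    simp only [Set.mem_setOf_eq, Pi.zero_apply, not_le] at hs
    intro hmem
    exact absurd (hgnn s (le_of_lt (lt_trans hs₀0 hmem))) (not_le.mpr hs)
  have hcompare : ∫⁻ s, ENNReal.ofReal (g s) ∂(F.restrict (Set.Ioi s₀)) ≤
      ∫⁻ s, ENNReal.ofReal (g s) ∂μ' := by
    rw [lintegral_eq_lintegral_meas_lt _ hgnnF hgm.aemeasurable,
      lintegral_eq_lintegral_meas_lt _ hgnnμ' hgm.aemeasurable]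
    exact lintegral_mono fun lam => aux_superlevel β s₀ hβ hs₀ F htail g hgmono hgm lam
  -- RHS of comparison as a real integral
  have hrm : Measurable fun t : ℝ => β * t ^ (-β-1) * g t :=
    (measurable_const.mul (measurable_id.pow_const _)).mul hgm
  have hrint : IntegrableOn (fun t : ℝ => β * t ^ (-β-1) * g t) (Set.Ioi s₀) := by
    have hbound : IntegrableOn (fun t : ℝ => β * (k * t ^ (-β-1) + t ^ (-β))) (Set.Ioi s₀) :=
      ((((integrableOn_Ioi_rpow_of_lt (by linarith : -β-1 < -1) hs₀0).const_mul k).add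
        (integrableOn_Ioi_rpow_of_lt (by linarith) hs₀0)).const_mul β)
    refine hbound.mono' hrm.aestronglyMeasurable ?_
    filter_upwards [ae_restrict_mem measurableSet_Ioi] with t ht
    have ht0 : (0:ℝ) < t := lt_trans hs₀0 ht
    have hrnn : (0:ℝ) ≤ t ^ (-β-1) := Real.rpow_nonneg ht0.le _
    have hgle : g t ≤ k + t := by
      have := (hL'range t).2
      have h0 : (0:ℝ) ≤ k + t := by linarith
      calc g t = (k + t) * L' t := rfl
        _ ≤ (k + t) * 1 := mul_le_mul_of_nonneg_left this h0
        _ = k + t := mul_one _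
    have hgnn' : (0:ℝ) ≤ g t := hgnn t ht0.le
    have e1 : t ^ (-β-1) * t = t ^ (-β) := by
      rw [← Real.rpow_add_one (ne_of_gt ht0)]
      norm_num
    rw [Real.norm_eq_abs, abs_of_nonneg (by positivity)]
    calc β * t ^ (-β-1) * g t ≤ β * t ^ (-β-1) * (k + t) := by
          exact mul_le_mul_of_nonneg_left hgle (by positivity)
      _ = β * (k * t ^ (-β-1) + t ^ (-β)) := by rw [← e1]; ring
  have hrnnae : 0 ≤ᵐ[volume.restrict (Set.Ioi s₀)] fun t : ℝ => β * t ^ (-β-1) * g t := by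
    filter_upwards [ae_restrict_mem measurableSet_Ioi] with t ht
    have ht0 : (0:ℝ) < t := lt_trans hs₀0 ht
    exact mul_nonneg (mul_nonneg hβ0.le (Real.rpow_nonneg ht0.le _)) (hgnn t ht0.le)
  have hRHS : ∫⁻ s, ENNReal.ofReal (g s) ∂μ' =
      ENNReal.ofReal (∫ t in Set.Ioi s₀, β * t ^ (-β-1) * g t) := by
    rw [hμ'def, lintegral_withDensity_eq_lintegral_mul _ hwmeas
      hgm.ennreal_ofReal]
    rw [ofReal_integral_eq_lintegral_ofReal hrint hrnnae]
    refine lintegral_congr_ae ?_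
    filter_upwards [ae_restrict_mem measurableSet_Ioi] with t ht
    have ht0 : (0:ℝ) < t := lt_trans hs₀0 ht
    simp only [Pi.mul_apply, hwdef]
    rw [← ENNReal.ofReal_mul (mul_nonneg hβ0.le (Real.rpow_nonneg ht0.le _))]
  have hpart2a : ∫ s in Set.Ioi s₀, g s ∂F ≤ ∫ t in Set.Ioi s₀, β * t ^ (-β-1) * g t := by
    rw [integral_eq_lintegral_of_nonneg_ae hgnnF hgm.aestronglyMeasurable.restrict]
    have hfin : ENNReal.ofReal (∫ t in Set.Ioi s₀, β * t ^ (-β-1) * g t) ≠ ⊤ :=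
      ENNReal.ofReal_ne_top
    have := hcompare
    rw [hRHS] at this
    calc (∫⁻ s, ENNReal.ofReal (g s) ∂(F.restrict (Set.Ioi s₀))).toReal
        ≤ (ENNReal.ofReal (∫ t in Set.Ioi s₀, β * t ^ (-β-1) * g t)).toReal :=
          ENNReal.toReal_mono hfin this
      _ = ∫ t in Set.Ioi s₀, β * t ^ (-β-1) * g t := ENNReal.toReal_ofReal
          (setIntegral_nonneg measurableSet_Ioi fun t ht =>
            mul_nonneg (mul_nonneg hβ0.le
              (Real.rpow_nonneg (le_of_lt (lt_trans hs₀0 ht)) _)) (hgnn t (le_of_lt (lt_trans hs₀0 ht))))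
  have hpart2b : ∫ t in Set.Ioi s₀, β * t ^ (-β-1) * g t ≤
      2 * k * β * ∫ t in Set.Ioi s₀, t ^ (-β) * L' t := by
    rw [← integral_const_mul]
    refine setIntegral_mono_on hrint (htailint.const_mul _) measurableSet_Ioi ?_
    intro t ht
    have ht0 : (0:ℝ) < t := lt_trans hs₀0 ht
    have ht1 : (1:ℝ) ≤ t := le_trans hs₀ (le_of_lt ht)
    have e1 : t ^ (-β-1) * t = t ^ (-β) := by
      rw [← Real.rpow_add_one (ne_of_gt ht0)]
      norm_num
    have e2 : t ^ (-β-1) ≤ t ^ (-β) := Real.rpow_le_rpow_of_exponent_le ht1 (by linarith)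
    have hL0 := (hL'range t).1
    have hb : t ^ (-β-1) * (k + t) ≤ 2 * k * t ^ (-β) := by
      have h1 : t ^ (-β-1) * k ≤ t ^ (-β) * k :=
        mul_le_mul_of_nonneg_right e2 (le_of_lt hk0)
      have h2 : t ^ (-β) ≤ k * t ^ (-β) := by
        nlinarith [Real.rpow_nonneg ht0.le (-β)]
      nlinarith [e1]
    calc β * t ^ (-β-1) * g t = β * (t ^ (-β-1) * (k + t)) * L' t := by
          simp only [hgdef]; ring
      _ ≤ β * (2 * k * t ^ (-β)) * L' t := by
          refine mul_le_mul_of_nonneg_right (mul_le_mul_of_nonneg_left hb hβ0.le) hL0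
      _ = 2 * k * β * (t ^ (-β) * L' t) := by ring
  -- final combination
  have hIeq : ∫ s in Set.Ioi (1:ℝ), s ^ (-β) * L s = I := by
    rw [hIdef]
    refine setIntegral_congr_fun measurableSet_Ioi ?_
    intro t ht
    dsimp only
    rw [hL'eq t (le_of_lt (lt_trans one_pos ht))]
  rw [h0, hsplit, hIeq]
  -- numeric pieces
  have hQnn : (0:ℝ) ≤ s₀ ^ β := Real.rpow_nonneg hs₀0.le _
  have hQ : s₀ ^ β = s₀ ^ (β - 1) * s₀ := by
    have h := Real.rpow_add_one (ne_of_gt hs₀0) (β - 1)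
    have e : β - 1 + 1 = β := by ring
    rwa [e] at h
  have hR : s₀ ^ (β + 1) = s₀ ^ β * s₀ := Real.rpow_add_one (ne_of_gt hs₀0) β
  have hPQ : s₀ ^ (β - 1) * s₀ ^ (1 - β) = 1 := by
    rw [← Real.rpow_add hs₀0]
    norm_num
  have hPnn : (0:ℝ) ≤ s₀ ^ (β - 1) := Real.rpow_nonneg hs₀0.le _
  have hLs₀' : L' s₀ ≤ (β - 1) * s₀ ^ (β - 1) * I := by
    have h3 : (0:ℝ) < s₀ ^ (1 - β) / (β - 1) :=
      div_pos (Real.rpow_pos_of_pos hs₀0 _) (by linarith)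
    have := mul_le_mul_of_nonneg_left hLs₀ (le_of_lt (show (0:ℝ) < (β-1) * s₀ ^ (β-1) by
      have : (0:ℝ) < s₀ ^ (β - 1) := Real.rpow_pos_of_pos hs₀0 _
      nlinarith))
    have hb1 : β - 1 ≠ 0 := by linarith
    calc L' s₀ = L' s₀ * (s₀ ^ (β - 1) * s₀ ^ (1 - β)) * ((β - 1) * (β - 1)⁻¹) := by
          rw [hPQ, mul_inv_cancel₀ hb1]; ring
      _ = (β - 1) * s₀ ^ (β - 1) * (L' s₀ * (s₀ ^ (1 - β) / (β - 1))) := by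
          rw [div_eq_mul_inv]; ring
      _ ≤ (β - 1) * s₀ ^ (β - 1) * I := this
  have hstep1 : (k + s₀) * L' s₀ ≤ 2 * k * (β - 1) * (s₀ ^ β) * I := by
    have h1 : (k + s₀) * L' s₀ ≤ (2 * k * s₀) * L' s₀ :=
      mul_le_mul_of_nonneg_right (by nlinarith) (hL'range s₀).1
    have h2 : (2 * k * s₀) * L' s₀ ≤ (2 * k * s₀) * ((β - 1) * s₀ ^ (β - 1) * I) :=
      mul_le_mul_of_nonneg_left hLs₀' (by positivity)
    calc (k + s₀) * L' s₀ ≤ (2 * k * s₀) * ((β - 1) * s₀ ^ (β - 1) * I) := h1.trans h2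
      _ = 2 * k * (β - 1) * (s₀ ^ (β - 1) * s₀) * I := by ring
      _ = 2 * k * (β - 1) * (s₀ ^ β) * I := by rw [← hQ]
  have hstep2 : 2 * k * β * (∫ t in Set.Ioi s₀, t ^ (-β) * L' t) ≤ 2 * k * β * I :=
    mul_le_mul_of_nonneg_left hsubI (by positivity)
  have hcoef : (β - 1) * s₀ ^ β ≤ β * s₀ ^ (β + 1) := by
    rw [hR]
    have h5 : (0:ℝ) ≤ β * (s₀ - 1) := mul_nonneg hβ0.le (by linarith)
    have h6 : (0:ℝ) ≤ s₀ ^ β * (β * s₀ - β + 1) := mul_nonneg hQnn (by linarith)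
    nlinarith [h6]
  have hfin : 2 * k * (β - 1) * (s₀ ^ β) * I + 2 * k * β * I ≤
      2 * β * (s₀ ^ (β + 1) + 1) * k * I := by
    have := mul_le_mul_of_nonneg_right hcoef (by positivity : (0:ℝ) ≤ 2 * k * I)
    nlinarith
  linarith [hpart1.trans hstep1, hpart2a.trans (hpart2b.trans hstep2)]
end
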